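/- arXiv:2106.07668 — 7 statements merged into one kernel-verified Lean document; each statement's English description precedes it below -/
import Mathlib

section
/- For any Hermitian matrix X on a bipartite space, ‖X^{T_A}‖₁ = ‖X‖₁ is preserved if X is separable (a convex combination of product states ρ_A ⊗ ρ_B); in particular, for a separable density matrix ρ, the partial transpose ρ^{T_A} is positive semidefinite (Peres criterion). -/
open Kronecker
open scoped ComplexOrder
open Matrix

/-- Trace norm `‖X‖₁ = Tr √(X†X)`, as the sum of the singular values of `X`. -/
noncomputable def traceNorm {n : Type*} [Fintype n] [DecidableEq n]
    (X : Matrix n n ℂ) : ℝ :=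
  ∑ i, Real.sqrt ((Matrix.isHermitian_conjTranspose_mul_self X).eigenvalues i)

/-- Partial transpose with respect to the first tensor factor. -/
def ptA {α β : Type*} (X : Matrix (α × β) (α × β) ℂ) : Matrix (α × β) (α × β) ℂ :=
  Matrix.of fun p q => X (q.1, p.2) (p.1, q.2)

/-- A density matrix: positive semidefinite with unit trace. -/
def IsDensityMatrix {n : Type*} [Fintype n] [DecidableEq n] (ρ : Matrix n n ℂ) : Prop :=
  ρ.PosSemidef ∧ ρ.trace = 1

section aux

variable {n : Type*} [Fintype n] [DecidableEq n]

lemma posSemidef_smul {M : Matrix n n ℂ} (hM : M.PosSemidef) {c : ℝ} (hc : 0 ≤ c) :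
    ((c : ℂ) • M).PosSemidef := by
  constructor
  · unfold Matrix.IsHermitian
    rw [Matrix.conjTranspose_smul, hM.1, RCLike.star_def, Complex.conj_ofReal]
  · exact (hM.smul (a := (c : ℂ)) (by exact_mod_cast hc)).2

lemma posSemidef_sum {k : ℕ} (M : Fin k → Matrix n n ℂ)
    (h : ∀ i, (M i).PosSemidef) : (∑ i, M i).PosSemidef := by
  classical
  induction k with
  | zero => simpa using Matrix.PosSemidef.zero
  | succ m ih =>
    rw [Fin.sum_univ_succ]
    exact ((h 0).add (ih _ fun i => h i.succ))

lemma kron_conjTranspose {A B : Type*} [Fintype A] [Fintype B]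
    (M : Matrix A A ℂ) (N : Matrix B B ℂ) : (M ⊗ₖ N)ᴴ = Mᴴ ⊗ₖ Nᴴ := by
  ext ⟨a, b⟩ ⟨c, d⟩
  simp [Matrix.conjTranspose_apply, Matrix.kroneckerMap_apply, mul_comm]

lemma posSemidef_kron {A B : Type*} [Fintype A] [Fintype B] [DecidableEq A] [DecidableEq B]
    {M : Matrix A A ℂ} {N : Matrix B B ℂ} (hM : M.PosSemidef) (hN : N.PosSemidef) :
    (M ⊗ₖ N).PosSemidef := by
  exact hM.kronecker hN

/-- The trace norm of a positive semidefinite matrix is the real part of its trace. -/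
lemma traceNorm_of_posSemidef {X : Matrix n n ℂ} (hX : X.PosSemidef) :
    (traceNorm X : ℂ) = X.trace := by
  have hXsq : Xᴴ * X = X ^ 2 := by rw [hX.1, pow_two]
  have h2 : (Xᴴ * X).PosSemidef := Matrix.posSemidef_conjTranspose_mul_self X
  open scoped MatrixOrder in
  have hsqrt : X = CFC.sqrt (Xᴴ * X) := by
    rw [hXsq]; exact (CFC.sqrt_sq X hX.nonneg).symm
  -- trace of sqrt equals sum of sqrt of the eigenvalues
  open scoped MatrixOrder in
  have : (CFC.sqrt (Xᴴ * X)).trace = ∑ i, (Real.sqrt (h2.1.eigenvalues i) : ℂ) := by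
    rw [CFC.sqrt_eq_real_sqrt _ h2.nonneg, cfcₙ_eq_cfc (hf0 := Real.sqrt_zero), h2.1.cfc_eq,
      IsHermitian.cfc, Unitary.conjStarAlgAut_apply, Matrix.trace_mul_cycle]
    simp [Function.comp]
  rw [← hsqrt] at this
  rw [this, traceNorm]
  push_cast
  rfl

lemma trace_ptA {A B : Type*} [Fintype A] [Fintype B]
    (X : Matrix (A × B) (A × B) ℂ) : (ptA X).trace = X.trace := by
  simp [Matrix.trace, Matrix.diag, ptA]

end aux

theorem stmt_4 {A B : Type*} [Fintype A] [Fintype B] [DecidableEq A] [DecidableEq B]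
    (ρ : Matrix (A × B) (A × B) ℂ) (hρ : IsDensityMatrix ρ)
    (hsep : ∃ (k : ℕ) (p : Fin k → ℝ) (σ : Fin k → Matrix A A ℂ)
        (τ : Fin k → Matrix B B ℂ),
      (∀ i, 0 ≤ p i) ∧ (∑ i, p i) = 1 ∧
      (∀ i, IsDensityMatrix (σ i)) ∧ (∀ i, IsDensityMatrix (τ i)) ∧
      ρ = ∑ i, (p i : ℂ) • (σ i ⊗ₖ τ i)) :
    traceNorm (ptA ρ) = traceNorm ρ ∧ (ptA ρ).PosSemidef := by
  obtain ⟨k, p, σ, τ, hp, hp1, hσ, hτ, hρeq⟩ := hsep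
  have hpt : ptA ρ = ∑ i, (p i : ℂ) • ((σ i)ᵀ ⊗ₖ τ i) := by
    ext ⟨a, b⟩ ⟨c, d⟩
    simp [ptA, hρeq, Matrix.sum_apply, Matrix.kroneckerMap_apply, Matrix.transpose_apply]
  have hpsd : (ptA ρ).PosSemidef := by
    rw [hpt]
    exact posSemidef_sum _ fun i =>
      posSemidef_smul (posSemidef_kron ((hσ i).1.transpose) (hτ i).1) (hp i)
  refine ⟨?_, hpsd⟩
  have h1 : (traceNorm (ptA ρ) : ℂ) = (ptA ρ).trace := traceNorm_of_posSemidef hpsd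
  have h2 : (traceNorm ρ : ℂ) = ρ.trace := traceNorm_of_posSemidef hρ.1
  have : (traceNorm (ptA ρ) : ℂ) = (traceNorm ρ : ℂ) := by rw [h1, h2, trace_ptA]
  exact_mod_cast this
end

section
/- If a tripartite pure state factorizes as |Ψ_ABC⟩ = |Ψ_{AB_L}⟩ ⊗ |Ψ_{B_RC}⟩ under a decomposition H_B = H_{B_L} ⊗ H_{B_R}, then the entanglement negativity satisfies E_{A:BC}(|Ψ⟩⟨Ψ|) = E_{A:B}(Tr_C |Ψ⟩⟨Ψ|). -/
/-- Partial trace over the last tensor factor `C`. -/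
noncomputable def traceOutC {α β γ : Type*} [Fintype γ]
    (X : Matrix (α × β × γ) (α × β × γ) ℂ) : Matrix (α × β) (α × β) ℂ :=
  Matrix.of fun p q => ∑ c, X (p.1, p.2, c) (q.1, q.2, c)

/-- The entanglement negativity `E_{A:rest} = log ‖ρ^{T_A}‖₁`. -/
noncomputable def negE {α β : Type*} [Fintype α] [Fintype β] [DecidableEq α] [DecidableEq β]
    (ρ : Matrix (α × β) (α × β) ℂ) : ℝ :=
  Real.log (traceNorm (ptA ρ))

section Helpers

open Matrix Polynomial Kronecker ComplexOrder

lemma charpoly_conj_unit {n : Type*} [Fintype n] [DecidableEq n]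
    (P A Q : Matrix n n ℂ) (h : P * Q = 1) :
    (P * A * Q).charpoly = A.charpoly := by
  have hQP : Q * P = 1 := mul_eq_one_comm.mp h
  have hPQ : (P.map C) * (Q.map C) = 1 := by
    rw [← Matrix.map_mul, h, Matrix.map_one C (map_zero _) (map_one _)]
  have hQP' : (Q.map C) * (P.map C) = 1 := mul_eq_one_comm.mp hPQ
  unfold Matrix.charpoly
  have hsc : (scalar n) (X : ℂ[X]) = P.map C * (scalar n) X * Q.map C := by
    rw [← (Matrix.scalar_commute (X : ℂ[X]) (fun r => (Commute.all _ _)) (P.map C)).eq,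
      mul_assoc, hPQ, mul_one]
  have : charmatrix (P * A * Q) = (P.map C) * charmatrix A * (Q.map C) := by
    unfold charmatrix
    rw [Matrix.mul_sub, Matrix.sub_mul, ← hsc]
    congr 1
    simp [RingHom.mapMatrix_apply, Matrix.map_mul]
  rw [this, det_mul, det_mul, mul_comm, ← mul_assoc, ← det_mul, hQP', det_one, one_mul]

lemma charpoly_diag {n : Type*} [Fintype n] [DecidableEq n] (d : n → ℂ) :
    (diagonal d).charpoly = ∏ i, (X - C (d i)) := by
  unfold Matrix.charpoly charmatrix
  have : (scalar n) (X : ℂ[X]) - C.mapMatrix (diagonal d)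
      = diagonal (fun i => X - C (d i)) := by
    rw [RingHom.mapMatrix_apply]
    ext i j
    rcases eq_or_ne i j with rfl | hij
    · simp [Matrix.scalar_apply]
    · simp [Matrix.scalar_apply, Matrix.diagonal_apply_ne _ hij, hij]
  rw [this, det_diagonal]

lemma charpoly_hermitian {n : Type*} [Fintype n] [DecidableEq n]
    {A : Matrix n n ℂ} (hA : A.IsHermitian) :
    A.charpoly = ∏ i, (X - C ((hA.eigenvalues i : ℂ))) := by
  have hU : (hA.eigenvectorUnitary : Matrix n n ℂ) * (star hA.eigenvectorUnitary : Matrix n n ℂ)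
      = 1 := Matrix.mem_unitaryGroup_iff.mp hA.eigenvectorUnitary.2
  conv_lhs => rw [hA.spectral_theorem, Unitary.conjStarAlgAut_apply]
  rw [charpoly_conj_unit _ _ _ hU, charpoly_diag]
  rfl

lemma eig_multiset_of_charpoly {n m : Type*} [Fintype n] [DecidableEq n] [Fintype m]
    {A : Matrix n n ℂ} (hA : A.IsHermitian) (d : m → ℝ)
    (h : A.charpoly = ∏ j, (X - C ((d j : ℂ)))) :
    Multiset.map hA.eigenvalues Finset.univ.val = Multiset.map d Finset.univ.val := by
  have h1 : A.charpoly = ((Multiset.map hA.eigenvalues Finset.univ.val).map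
      (fun a : ℝ => X - C ((a : ℂ)))).prod := by
    rw [charpoly_hermitian hA, Finset.prod_eq_multiset_prod, Multiset.map_map]
    rfl
  have h2 : A.charpoly = ((Multiset.map d Finset.univ.val).map
      (fun a : ℝ => X - C ((a : ℂ)))).prod := by
    rw [h, Finset.prod_eq_multiset_prod, Multiset.map_map]
    rfl
  have key : ((Multiset.map hA.eigenvalues Finset.univ.val).map (fun a : ℝ => (a : ℂ)))
      = ((Multiset.map d Finset.univ.val).map (fun a : ℝ => (a : ℂ))) := by
    have r1 := Polynomial.roots_multiset_prod_X_sub_C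
      ((Multiset.map hA.eigenvalues Finset.univ.val).map (fun a : ℝ => (a : ℂ)))
    have r2 := Polynomial.roots_multiset_prod_X_sub_C
      ((Multiset.map d Finset.univ.val).map (fun a : ℝ => (a : ℂ)))
    rw [← r1, ← r2]
    simp only [Multiset.map_map, Function.comp_def] at h1 h2 ⊢
    rw [← h1, ← h2]
  exact Multiset.map_injective Complex.ofReal_injective key

lemma trace_eq_sum_eig {n : Type*} [Fintype n] [DecidableEq n]
    {A : Matrix n n ℂ} (hA : A.IsHermitian) :
    A.trace = ∑ i, (hA.eigenvalues i : ℂ) := by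
  have h1 : (star hA.eigenvectorUnitary : Matrix n n ℂ) * (hA.eigenvectorUnitary : Matrix n n ℂ)
      = 1 := Matrix.mem_unitaryGroup_iff'.mp hA.eigenvectorUnitary.2
  conv_lhs => rw [hA.spectral_theorem, Unitary.conjStarAlgAut_apply]
  rw [Matrix.trace_mul_cycle, h1, one_mul, Matrix.trace_diagonal]
  rfl

lemma sum_eig_of_trace_one {m : Type*} [Fintype m] [DecidableEq m]
    (Q : Matrix m m ℂ) (hQ : Q.PosSemidef) (htr : Q.trace = 1) :
    (∑ j, hQ.1.eigenvalues j) = 1 := by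
  have h := trace_eq_sum_eig hQ.1
  rw [htr] at h
  have h2 : ((∑ j, hQ.1.eigenvalues j : ℝ) : ℂ) = ((1 : ℝ) : ℂ) := by
    push_cast
    rw [← h]
  exact_mod_cast h2

lemma conjTranspose_kron {n m : Type*} (P : Matrix n n ℂ) (Q : Matrix m m ℂ) :
    (P ⊗ₖ Q)ᴴ = Pᴴ ⊗ₖ Qᴴ := by
  ext ⟨i, j⟩ ⟨k, l⟩
  simp [Matrix.conjTranspose_apply, Matrix.kroneckerMap_apply, star_mul']

lemma herm_sq_spectral {n : Type*} [Fintype n] [DecidableEq n]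
    {P : Matrix n n ℂ} (hP : P.IsHermitian) :
    P * P = (hP.eigenvectorUnitary : Matrix n n ℂ)
      * diagonal (fun i => ((hP.eigenvalues i : ℂ) * (hP.eigenvalues i : ℂ)))
      * (star hP.eigenvectorUnitary : Matrix n n ℂ) := by
  have h1 : (star hP.eigenvectorUnitary : Matrix n n ℂ) * (hP.eigenvectorUnitary : Matrix n n ℂ)
      = 1 := Matrix.mem_unitaryGroup_iff'.mp hP.eigenvectorUnitary.2
  conv_lhs => rw [hP.spectral_theorem, Unitary.conjStarAlgAut_apply]
  rw [← Matrix.diagonal_mul_diagonal]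
  have h2 : (diagonal (RCLike.ofReal ∘ hP.eigenvalues) : Matrix n n ℂ)
      = diagonal (fun i => (hP.eigenvalues i : ℂ)) := rfl
  rw [h2, mul_assoc, mul_assoc, mul_assoc,
    ← mul_assoc ((star hP.eigenvectorUnitary : Matrix n n ℂ)),
    h1, one_mul, ← mul_assoc, ← mul_assoc]
  simp only [mul_assoc]

lemma traceNorm_kron {l n m : Type*} [Fintype l] [DecidableEq l]
    [Fintype n] [DecidableEq n] [Fintype m] [DecidableEq m]
    (e : l ≃ n × m) (P : Matrix n n ℂ) (Q : Matrix m m ℂ)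
    (hP : P.IsHermitian) (hQ : Q.PosSemidef) :
    traceNorm ((P ⊗ₖ Q).submatrix e e)
      = (∑ i, |hP.eigenvalues i|) * (∑ j, hQ.1.eigenvalues j) := by
  set Z : Matrix l l ℂ := (P ⊗ₖ Q).submatrix e e with hZ
  have hZZ : Zᴴ * Z = ((P * P) ⊗ₖ (Q * Q)).submatrix e e := by
    rw [hZ, Matrix.conjTranspose_submatrix, Matrix.submatrix_mul_equiv,
      conjTranspose_kron, hP.eq, hQ.1.eq, ← Matrix.mul_kronecker_mul]
  set d : n × m → ℝ := fun p => (hP.eigenvalues p.1)^2 * (hQ.1.eigenvalues p.2)^2 with hd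
  have hcp : (Zᴴ * Z).charpoly = ∏ p : n × m, (X - C ((d p : ℂ))) := by
    have hre : (Zᴴ * Z).charpoly = ((P * P) ⊗ₖ (Q * Q)).charpoly := by
      rw [hZZ]
      rw [show ((P * P) ⊗ₖ (Q * Q)).submatrix ⇑e ⇑e
          = Matrix.reindex e.symm e.symm ((P * P) ⊗ₖ (Q * Q)) by
        simp [Matrix.reindex_apply]]
      exact Matrix.charpoly_reindex e.symm _
    rw [hre, herm_sq_spectral hP, herm_sq_spectral hQ.1,
      Matrix.mul_kronecker_mul, Matrix.mul_kronecker_mul, Matrix.diagonal_kronecker_diagonal]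
    have hW : ((hP.eigenvectorUnitary : Matrix n n ℂ) ⊗ₖ (hQ.1.eigenvectorUnitary : Matrix m m ℂ))
        * ((star hP.eigenvectorUnitary : Matrix n n ℂ)
            ⊗ₖ (star hQ.1.eigenvectorUnitary : Matrix m m ℂ)) = 1 := by
      rw [← Matrix.mul_kronecker_mul,
        Matrix.mem_unitaryGroup_iff.mp hP.eigenvectorUnitary.2,
        Matrix.mem_unitaryGroup_iff.mp hQ.1.eigenvectorUnitary.2,
        Matrix.one_kronecker_one]
    rw [charpoly_conj_unit _ _ _ hW, charpoly_diag]
    refine Finset.prod_congr rfl fun p _ => ?_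
    rw [hd]
    push_cast
    ring_nf
  have hmult := eig_multiset_of_charpoly (Matrix.isHermitian_conjTranspose_mul_self Z) d hcp
  have hsum : traceNorm Z = ∑ p : n × m, Real.sqrt (d p) := by
    rw [traceNorm, Finset.sum_eq_multiset_sum, Finset.sum_eq_multiset_sum]
    rw [show (Multiset.map (fun i => Real.sqrt
        ((Matrix.isHermitian_conjTranspose_mul_self Z).eigenvalues i)) Finset.univ.val)
      = (Multiset.map (Matrix.isHermitian_conjTranspose_mul_self Z).eigenvalues
          Finset.univ.val).map Real.sqrt by rw [Multiset.map_map]; rfl]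
    rw [hmult, Multiset.map_map]
    rfl
  rw [hsum]
  have : ∀ p : n × m, Real.sqrt (d p) = |hP.eigenvalues p.1| * hQ.1.eigenvalues p.2 := by
    intro p
    rw [hd]
    rw [Real.sqrt_mul (sq_nonneg _), Real.sqrt_sq_eq_abs, Real.sqrt_sq_eq_abs,
      abs_of_nonneg (hQ.eigenvalues_nonneg p.2)]
  simp only [this]
  rw [Finset.sum_mul_sum]
  exact Fintype.sum_prod_type _

end Helpers

open Matrix Kronecker ComplexOrder in
set_option maxHeartbeats 1000000 in
theorem stmt_5 {A BL BR C : Type*} [Fintype A] [Fintype BL] [Fintype BR] [Fintype C]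
    [DecidableEq A] [DecidableEq BL] [DecidableEq BR] [DecidableEq C]
    (Ψ₁ : A × BL → ℂ) (Ψ₂ : BR × C → ℂ)
    (h₁ : ∑ p, ‖Ψ₁ p‖ ^ 2 = 1) (h₂ : ∑ p, ‖Ψ₂ p‖ ^ 2 = 1)
    (Ψ : A × (BL × BR) × C → ℂ)
    (hΨ : ∀ a bl br c, Ψ (a, (bl, br), c) = Ψ₁ (a, bl) * Ψ₂ (br, c))
    (ρ : Matrix (A × (BL × BR) × C) (A × (BL × BR) × C) ℂ)
    (hρ : ∀ p q, ρ p q = Ψ p * star (Ψ q)) :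
    negE ρ = negE (traceOutC ρ) := by
  classical
  set T : Matrix (A × BL) (A × BL) ℂ :=
    Matrix.of fun p q => Ψ₁ (q.1, p.2) * star (Ψ₁ (p.1, q.2)) with hTdef
  have hT : T.IsHermitian := by
    ext p q
    simp only [Matrix.conjTranspose_apply, hTdef, Matrix.of_apply, star_mul', star_star]
    ring
  set σ₂ : Matrix (BR × C) (BR × C) ℂ :=
    Matrix.of fun p q => Ψ₂ p * star (Ψ₂ q) with hσdef
  set M : Matrix (BR × C) Unit ℂ := Matrix.of fun p _ => Ψ₂ p with hMdef
  have hσ : σ₂.PosSemidef := by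
    have : σ₂ = M * Mᴴ := by
      ext p q
      simp [hσdef, hMdef, Matrix.mul_apply]
    rw [this]
    exact Matrix.posSemidef_self_mul_conjTranspose M
  set G : Matrix BR BR ℂ :=
    Matrix.of fun b b' => ∑ c, Ψ₂ (b, c) * star (Ψ₂ (b', c)) with hGdef
  set N : Matrix BR C ℂ := Matrix.of fun b c => Ψ₂ (b, c) with hNdef
  have hG : G.PosSemidef := by
    have : G = N * Nᴴ := by
      ext p q
      simp [hGdef, hNdef, Matrix.mul_apply]
    rw [this]
    exact Matrix.posSemidef_self_mul_conjTranspose N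
  set e₁ : (A × (BL × BR) × C) ≃ ((A × BL) × (BR × C)) :=
    ⟨fun x => ((x.1, x.2.1.1), (x.2.1.2, x.2.2)),
     fun y => (y.1.1, (y.1.2, y.2.1), y.2.2),
     fun x => rfl, fun y => rfl⟩ with he₁
  set e₂ : (A × (BL × BR)) ≃ ((A × BL) × BR) :=
    ⟨fun x => ((x.1, x.2.1), x.2.2),
     fun y => (y.1.1, (y.1.2, y.2)),
     fun x => rfl, fun y => rfl⟩ with he₂
  have hptA : ptA ρ = (T ⊗ₖ σ₂).submatrix e₁ e₁ := by
    ext ⟨a, ⟨bl, br⟩, c⟩ ⟨a', ⟨bl', br'⟩, c'⟩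
    simp only [ptA, Matrix.of_apply, hρ, hΨ, Matrix.submatrix_apply, he₁,
      Equiv.coe_fn_mk, Matrix.kroneckerMap_apply, hTdef, hσdef, star_mul']
    ring
  have hptA2 : ptA (traceOutC ρ) = (T ⊗ₖ G).submatrix e₂ e₂ := by
    ext ⟨a, bl, br⟩ ⟨a', bl', br'⟩
    simp only [ptA, traceOutC, Matrix.of_apply, hρ, hΨ, Matrix.submatrix_apply, he₂,
      Equiv.coe_fn_mk, Matrix.kroneckerMap_apply, hTdef, hGdef, star_mul', Finset.mul_sum]
    refine Finset.sum_congr rfl fun c _ => ?_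
    ring
  have hσtr : σ₂.trace = 1 := by
    have : σ₂.trace = ∑ p, (Ψ₂ p * star (Ψ₂ p)) := by
      simp [Matrix.trace, Matrix.diag, hσdef]
    rw [this]
    have hpt : ∀ p : BR × C, Ψ₂ p * star (Ψ₂ p) = ((‖Ψ₂ p‖ ^ 2 : ℝ) : ℂ) := by
      intro p
      rw [show (star (Ψ₂ p)) = (starRingEnd ℂ) (Ψ₂ p) from rfl, Complex.mul_conj,
        ← Complex.sq_norm]
    simp only [hpt]
    rw [← Complex.ofReal_sum, h₂, Complex.ofReal_one]
  have hGtr : G.trace = 1 := by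
    have : G.trace = ∑ b, ∑ c, (Ψ₂ (b, c) * star (Ψ₂ (b, c))) := by
      simp [Matrix.trace, Matrix.diag, hGdef]
    rw [this]
    have h3 : ∀ p : BR × C, Ψ₂ p * star (Ψ₂ p) = ((‖Ψ₂ p‖ ^ 2 : ℝ) : ℂ) := by
      intro p
      rw [show (star (Ψ₂ p)) = (starRingEnd ℂ) (Ψ₂ p) from rfl, Complex.mul_conj,
        ← Complex.sq_norm]
    simp only [h3]
    rw [show (∑ b : BR, ∑ c : C, ((‖Ψ₂ (b, c)‖ ^ 2 : ℝ) : ℂ))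
        = ∑ p : BR × C, ((‖Ψ₂ p‖ ^ 2 : ℝ) : ℂ) from (Fintype.sum_prod_type (fun p : BR × C => ((‖Ψ₂ p‖ ^ 2 : ℝ) : ℂ))).symm]
    rw [← Complex.ofReal_sum, h₂, Complex.ofReal_one]
  have t1 : traceNorm (ptA ρ) = (∑ i, |hT.eigenvalues i|) := by
    rw [hptA, traceNorm_kron e₁ T σ₂ hT hσ, sum_eig_of_trace_one σ₂ hσ hσtr, mul_one]
  have t2 : traceNorm (ptA (traceOutC ρ)) = (∑ i, |hT.eigenvalues i|) := by
    rw [hptA2, traceNorm_kron e₂ T G hT hG, sum_eig_of_trace_one G hG hGtr, mul_one]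
  rw [negE, negE, t1, t2]
end

section
/- More generally, if ρ = Σ_j p_j ρ_{A B_L^j} ⊗ ρ_{B_R^j C} with probabilities p_j, where H_B = ⊕_j H_{B_L^j} ⊗ H_{B_R^j} is a direct-sum decomposition, then E_{A:BC}(ρ) = E_{A:B}(Tr_C ρ). -/
open scoped ComplexOrder

section MyHelpers
open Matrix Polynomial

lemma my_charpoly_diagonal {n : Type*} [Fintype n] [DecidableEq n] (b : n → ℂ) :
    (Matrix.diagonal b).charpoly = ∏ i, (X - C (b i)) := by
  have h : Matrix.charmatrix (Matrix.diagonal b)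
      = Matrix.diagonal fun i => (X : ℂ[X]) - C (b i) := by
    ext i j
    by_cases hij : i = j
    · subst hij; simp
    · simp [Matrix.charmatrix_apply_ne _ _ _ hij, Matrix.diagonal_apply_ne _ hij]
  rw [Matrix.charpoly, h, Matrix.det_diagonal]

lemma my_charpoly_conj {n : Type*} [Fintype n] [DecidableEq n]
    (U V M : Matrix n n ℂ) (hUV : U * V = 1) (hVU : V * U = 1) :
    (U * M * V).charpoly = M.charpoly := by
  have hmap : ∀ P Q : Matrix n n ℂ, (P * Q).map ⇑(C : ℂ →+* ℂ[X]) = P.map ⇑(C : ℂ →+* ℂ[X]) * Q.map ⇑(C : ℂ →+* ℂ[X]) :=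
    fun P Q => Matrix.map_mul
  have key : Matrix.charmatrix (U * M * V)
      = U.map ⇑(C : ℂ →+* ℂ[X]) * Matrix.charmatrix M * V.map ⇑(C : ℂ →+* ℂ[X]) := by
    unfold Matrix.charmatrix
    simp only [RingHom.mapMatrix_apply]
    rw [mul_sub, sub_mul]
    congr 1
    · have comm : Commute (Matrix.scalar n (X : ℂ[X])) (U.map ⇑(C : ℂ →+* ℂ[X])) :=
        Matrix.scalar_commute _ (fun r' => Commute.all _ _) _
      rw [← comm.eq, mul_assoc, ← hmap, hUV]
      rw [Matrix.map_one _ (map_zero _) (map_one _), mul_one]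
    · rw [← hmap, ← hmap]
  rw [Matrix.charpoly, key, Matrix.det_mul, Matrix.det_mul]
  have h1 : (V.map ⇑(C : ℂ →+* ℂ[X])).det * (U.map ⇑(C : ℂ →+* ℂ[X])).det = 1 := by
    rw [← Matrix.det_mul, ← hmap, hVU, Matrix.map_one _ (map_zero _) (map_one _), Matrix.det_one]
  calc (U.map ⇑(C : ℂ →+* ℂ[X])).det * (Matrix.charmatrix M).det * (V.map ⇑(C : ℂ →+* ℂ[X])).det
      = (Matrix.charmatrix M).det * ((V.map ⇑(C : ℂ →+* ℂ[X])).det * (U.map ⇑(C : ℂ →+* ℂ[X])).det) := by ring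
    _ = M.charpoly := by rw [h1, mul_one, Matrix.charpoly]

lemma my_roots_key {k : Type*} [Fintype k] (c : k → ℂ) :
    (∏ i, (X - C (c i))).roots = Finset.univ.val.map c := by
  rw [Polynomial.roots_prod _ _ (Finset.prod_ne_zero_iff.mpr fun i _ => Polynomial.X_sub_C_ne_zero (c i))]
  simp only [Polynomial.roots_X_sub_C]
  exact Multiset.bind_singleton _ _

lemma my_multiset_eq {n m : Type*} [Fintype n] [Fintype m] (a : n → ℂ) (b : m → ℂ)
    (h : ∏ i, (X - C (a i)) = ∏ i, (X - C (b i))) :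
    Finset.univ.val.map a = Finset.univ.val.map b := by
  exact (my_roots_key a).symm.trans (by rw [h, my_roots_key b])

lemma my_sum_transfer {n m : Type*} [Fintype n] [Fintype m] (a : n → ℝ) (b : m → ℝ)
    (h : Finset.univ.val.map (fun i => (a i : ℂ)) = Finset.univ.val.map (fun i => (b i : ℂ)))
    (g : ℝ → ℝ) : ∑ i, g (a i) = ∑ i, g (b i) := by
  have h2 := congrArg (fun s : Multiset ℂ => (s.map fun z => g z.re).sum) h
  simp only [Multiset.map_map, Function.comp, Complex.ofReal_re] at h2
  rw [Finset.sum, Finset.sum]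
  exact h2

open Polynomial in
lemma my_traceNorm_of_diag {n : Type*} [Fintype n] [DecidableEq n]
    (M U : Matrix n n ℂ) (d : n → ℝ)
    (hUU : U * Uᴴ = 1) (hUU' : Uᴴ * U = 1)
    (hM : M = U * Matrix.diagonal (fun i => (d i : ℂ)) * Uᴴ) :
    traceNorm M = ∑ i, |d i| := by
  have hstar : (star fun i => ((d i : ℝ) : ℂ)) = fun i => ((d i : ℝ) : ℂ) := by
    funext i
    rw [Pi.star_apply, RCLike.star_def, Complex.conj_ofReal]
  have hDH : (Matrix.diagonal (fun i => (d i : ℂ)))ᴴ = Matrix.diagonal (fun i => (d i : ℂ)) := by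
    rw [Matrix.diagonal_conjTranspose, hstar]
  have hH : Mᴴ = M := by
    rw [hM, Matrix.conjTranspose_mul, Matrix.conjTranspose_mul,
      Matrix.conjTranspose_conjTranspose, hDH, mul_assoc]
  have hsq : (fun i => ((d i : ℂ)) * ((d i : ℂ))) = (fun i => ((d i ^ 2 : ℝ) : ℂ)) := by
    funext i; push_cast; ring
  have hN : Mᴴ * M = U * Matrix.diagonal (fun i => ((d i ^ 2 : ℝ) : ℂ)) * Uᴴ := by
    rw [hH]
    conv_lhs => rw [hM]
    simp only [mul_assoc]
    rw [← mul_assoc Uᴴ U, hUU', one_mul,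
      ← mul_assoc (Matrix.diagonal fun i => ((d i : ℂ))) (Matrix.diagonal fun i => ((d i : ℂ))),
      Matrix.diagonal_mul_diagonal, hsq]
  have hcp1 : (Mᴴ * M).charpoly = ∏ i, (X - C ((d i ^ 2 : ℝ) : ℂ)) := by
    rw [hN, my_charpoly_conj _ _ _ hUU hUU', my_charpoly_diagonal]
  have hHerm := Matrix.isHermitian_conjTranspose_mul_self M
  have hW1 : (hHerm.eigenvectorUnitary : Matrix n n ℂ) * star (hHerm.eigenvectorUnitary : Matrix n n ℂ) = 1 :=
    Matrix.mem_unitaryGroup_iff.mp hHerm.eigenvectorUnitary.2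
  have hW2 : star (hHerm.eigenvectorUnitary : Matrix n n ℂ) * (hHerm.eigenvectorUnitary : Matrix n n ℂ) = 1 :=
    Matrix.mem_unitaryGroup_iff'.mp hHerm.eigenvectorUnitary.2
  have hcp2 : (Mᴴ * M).charpoly = ∏ i, (X - C ((hHerm.eigenvalues i : ℝ) : ℂ)) := by
    conv_lhs => rw [hHerm.spectral_theorem, Unitary.conjStarAlgAut_apply]
    rw [my_charpoly_conj _ _ _ hW1 hW2, my_charpoly_diagonal]
    simp [Function.comp]
  have hms := my_multiset_eq _ _ (hcp1.symm.trans hcp2)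
  have hsum := my_sum_transfer (fun i => d i ^ 2) (fun i => hHerm.eigenvalues i) hms Real.sqrt
  calc traceNorm M = ∑ i, Real.sqrt (hHerm.eigenvalues i) := rfl
    _ = ∑ i, Real.sqrt (d i ^ 2) := hsum.symm
    _ = ∑ i, |d i| := by simp [Real.sqrt_sq_eq_abs]

lemma my_trace_of_diag {n : Type*} [Fintype n] [DecidableEq n]
    (ρ : Matrix n n ℂ) (h : ρ.PosSemidef) (ht : ρ.trace = 1) :
    ∑ i, |h.1.eigenvalues i| = 1 := by
  have htr : ρ.trace = ∑ i, ((h.1.eigenvalues i : ℝ) : ℂ) := by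
    conv_lhs => rw [h.1.spectral_theorem, Unitary.conjStarAlgAut_apply]
    rw [Matrix.trace_mul_cycle,
      Matrix.mem_unitaryGroup_iff'.mp h.1.eigenvectorUnitary.2, one_mul, Matrix.trace_diagonal]
    simp [Function.comp]
  have h1 : ∑ i, ((h.1.eigenvalues i : ℝ) : ℂ) = 1 := htr.symm.trans ht
  have h2 : ∑ i, h.1.eigenvalues i = 1 := by exact_mod_cast h1
  rw [← h2]
  exact Finset.sum_congr rfl fun i _ => abs_of_nonneg (h.eigenvalues_nonneg i)


open Kronecker

lemma my_kron_conjTranspose {m n : Type*} (A : Matrix m m ℂ) (B : Matrix n n ℂ) :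
    (A ⊗ₖ B)ᴴ = Aᴴ ⊗ₖ Bᴴ := by
  ext p q
  simp [Matrix.conjTranspose_apply, Matrix.kroneckerMap_apply, star_mul']

lemma my_diag_submatrix {n I : Type*} [DecidableEq n] [DecidableEq I] (e : I ≃ n) (d : n → ℂ) :
    (Matrix.diagonal d).submatrix e e = Matrix.diagonal (fun i => d (e i)) := by
  ext i j
  rcases eq_or_ne i j with rfl | h
  · simp
  · rw [Matrix.submatrix_apply, Matrix.diagonal_apply_ne _ (fun hc => h (e.injective hc)),
      Matrix.diagonal_apply_ne _ h]

lemma bigdiag {J : Type*} [Fintype J] [DecidableEq J]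
    {K L : J → Type*} [∀ j, Fintype (K j)] [∀ j, DecidableEq (K j)]
    [∀ j, Fintype (L j)] [∀ j, DecidableEq (L j)]
    {I : Type*} [Fintype I] [DecidableEq I]
    (e : (Σ j, K j × L j) ≃ I)
    (M : Matrix I I ℂ) (c : J → ℝ)
    (X : ∀ j, Matrix (K j) (K j) ℂ) (Y : ∀ j, Matrix (L j) (L j) ℂ)
    (hX : ∀ j, (X j).IsHermitian) (hY : ∀ j, (Y j).IsHermitian)
    (hdiag : ∀ (j : J) (k k' : K j) (l l' : L j),
      M (e ⟨j, (k, l)⟩) (e ⟨j, (k', l')⟩) = (c j : ℂ) * X j k k' * Y j l l')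
    (hoffd : ∀ (j j' : J) (x : K j × L j) (x' : K j' × L j'), j ≠ j' →
      M (e ⟨j, x⟩) (e ⟨j', x'⟩) = 0) :
    traceNorm M
      = ∑ j, |c j| * ((∑ k, |(hX j).eigenvalues k|) * ∑ l, |(hY j).eigenvalues l|) := by
  classical
  set U1 : ∀ j, Matrix (K j) (K j) ℂ := fun j => ((hX j).eigenvectorUnitary : Matrix (K j) (K j) ℂ) with hU1def
  set U2 : ∀ j, Matrix (L j) (L j) ℂ := fun j => ((hY j).eigenvectorUnitary : Matrix (L j) (L j) ℂ) with hU2def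
  set W : ∀ j, Matrix (K j × L j) (K j × L j) ℂ := fun j => U1 j ⊗ₖ U2 j with hWdef
  set d : ∀ j, K j × L j → ℝ :=
    fun j x => c j * (hX j).eigenvalues x.1 * (hY j).eigenvalues x.2 with hddef
  set BigU : Matrix (Σ j, K j × L j) (Σ j, K j × L j) ℂ := Matrix.blockDiagonal' W with hBigUdef
  set U : Matrix I I ℂ := BigU.submatrix e.symm e.symm with hUdef
  -- unitarity of the blocks
  have hU1a : ∀ j, U1 j * (U1 j)ᴴ = 1 := fun j => by
    rw [← Matrix.star_eq_conjTranspose]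
    exact Matrix.mem_unitaryGroup_iff.mp (hX j).eigenvectorUnitary.2
  have hU1b : ∀ j, (U1 j)ᴴ * U1 j = 1 := fun j => by
    rw [← Matrix.star_eq_conjTranspose]
    exact Matrix.mem_unitaryGroup_iff'.mp (hX j).eigenvectorUnitary.2
  have hU2a : ∀ j, U2 j * (U2 j)ᴴ = 1 := fun j => by
    rw [← Matrix.star_eq_conjTranspose]
    exact Matrix.mem_unitaryGroup_iff.mp (hY j).eigenvectorUnitary.2
  have hU2b : ∀ j, (U2 j)ᴴ * U2 j = 1 := fun j => by
    rw [← Matrix.star_eq_conjTranspose]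
    exact Matrix.mem_unitaryGroup_iff'.mp (hY j).eigenvectorUnitary.2
  have hW1 : ∀ j, W j * (W j)ᴴ = 1 := fun j => by
    rw [hWdef]
    rw [my_kron_conjTranspose, ← Matrix.mul_kronecker_mul, hU1a, hU2a,
      Matrix.one_kronecker_one]
  have hW2 : ∀ j, (W j)ᴴ * W j = 1 := fun j => by
    rw [hWdef]
    rw [my_kron_conjTranspose, ← Matrix.mul_kronecker_mul, hU1b, hU2b,
      Matrix.one_kronecker_one]
  have hBig1 : BigU * BigUᴴ = 1 := by
    rw [hBigUdef, Matrix.blockDiagonal'_conjTranspose, ← Matrix.blockDiagonal'_mul]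
    simp only [hW1]
    exact Matrix.blockDiagonal'_one
  have hBig2 : BigUᴴ * BigU = 1 := by
    rw [hBigUdef, Matrix.blockDiagonal'_conjTranspose, ← Matrix.blockDiagonal'_mul]
    simp only [hW2]
    exact Matrix.blockDiagonal'_one
  have hUa : U * Uᴴ = 1 := by
    rw [hUdef, Matrix.conjTranspose_submatrix, Matrix.submatrix_mul_equiv, hBig1,
      Matrix.submatrix_one_equiv]
  have hUb : Uᴴ * U = 1 := by
    rw [hUdef, Matrix.conjTranspose_submatrix, Matrix.submatrix_mul_equiv, hBig2,
      Matrix.submatrix_one_equiv]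
  -- spectral decomposition of each block
  have hblockj : ∀ j, W j * Matrix.diagonal (fun x : K j × L j => ((d j x : ℝ) : ℂ)) * (W j)ᴴ
      = (c j : ℂ) • (X j ⊗ₖ Y j) := by
    intro j
    have hdiagj : Matrix.diagonal (fun x : K j × L j => ((d j x : ℝ) : ℂ))
        = (c j : ℂ) • ((Matrix.diagonal (RCLike.ofReal ∘ (hX j).eigenvalues)) ⊗ₖ
            (Matrix.diagonal (RCLike.ofReal ∘ (hY j).eigenvalues))) := by
      ext s t
      rcases eq_or_ne s t with rfl | h
      · simp [hddef, Function.comp, Complex.ofReal_mul, mul_assoc]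
      · have hor : s.1 ≠ t.1 ∨ s.2 ≠ t.2 := by
          by_contra hc
          push_neg at hc
          exact h (Prod.ext hc.1 hc.2)
        rw [Matrix.diagonal_apply_ne _ h, Matrix.smul_apply, Matrix.kroneckerMap_apply]
        rcases hor with h1 | h2
        · rw [Matrix.diagonal_apply_ne _ h1]; simp
        · rw [Matrix.diagonal_apply_ne _ h2]; simp
    rw [hdiagj, Matrix.mul_smul, Matrix.smul_mul]
    congr 1
    rw [hWdef]
    dsimp only
    rw [my_kron_conjTranspose, ← Matrix.mul_kronecker_mul, ← Matrix.mul_kronecker_mul,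
      hU1def, hU2def]
    dsimp only
    rw [← Matrix.star_eq_conjTranspose ((hX j).eigenvectorUnitary : Matrix (K j) (K j) ℂ),
      ← Matrix.star_eq_conjTranspose ((hY j).eigenvectorUnitary : Matrix (L j) (L j) ℂ),
      ← Unitary.conjStarAlgAut_apply (S := ℂ), ← Unitary.conjStarAlgAut_apply (S := ℂ),
      ← (hX j).spectral_theorem, ← (hY j).spectral_theorem]
  have hprod : BigU * (Matrix.blockDiagonal'
        fun j => Matrix.diagonal fun x : K j × L j => ((d j x : ℝ) : ℂ)) * BigUᴴ
      = Matrix.blockDiagonal' (fun j => (c j : ℂ) • (X j ⊗ₖ Y j)) := by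
    rw [hBigUdef, Matrix.blockDiagonal'_conjTranspose, ← Matrix.blockDiagonal'_mul,
      ← Matrix.blockDiagonal'_mul]
    refine congrArg Matrix.blockDiagonal' (funext fun j => ?_)
    exact hblockj j
  -- the diag representation of M
  have hM : M = U * Matrix.diagonal
      (fun i : I => ((d (e.symm i).1 (e.symm i).2 : ℝ) : ℂ)) * Uᴴ := by
    have hDsub : Matrix.diagonal (fun i : I => ((d (e.symm i).1 (e.symm i).2 : ℝ) : ℂ))
        = (Matrix.diagonal (fun s : Σ j, K j × L j => ((d s.1 s.2 : ℝ) : ℂ))).submatrix e.symm e.symm :=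
      (my_diag_submatrix e.symm (fun s : Σ j, K j × L j => ((d s.1 s.2 : ℝ) : ℂ))).symm
    have hDsig : Matrix.diagonal (fun s : Σ j, K j × L j => ((d s.1 s.2 : ℝ) : ℂ))
        = Matrix.blockDiagonal' (fun j => Matrix.diagonal (fun x : K j × L j => ((d j x : ℝ) : ℂ))) :=
      (Matrix.blockDiagonal'_diagonal (fun j (x : K j × L j) => ((d j x : ℝ) : ℂ))).symm
    rw [hDsub, hUdef, Matrix.conjTranspose_submatrix, Matrix.submatrix_mul_equiv,
      Matrix.submatrix_mul_equiv, hDsig, hprod]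
    ext i i'
    obtain ⟨s, rfl⟩ := e.surjective i
    obtain ⟨t, rfl⟩ := e.surjective i'
    obtain ⟨j, k, l⟩ := s
    obtain ⟨j', k', l'⟩ := t
    rw [Matrix.submatrix_apply, Equiv.symm_apply_apply, Equiv.symm_apply_apply]
    rcases eq_or_ne j j' with rfl | hne
    · rw [Matrix.blockDiagonal'_apply_eq, hdiag]
      simp [Matrix.smul_apply, mul_assoc]
    · rw [Matrix.blockDiagonal'_apply_ne _ _ _ hne, hoffd _ _ _ _ hne]
  -- conclude
  rw [my_traceNorm_of_diag M U _ hUa hUb hM]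
  have hsum' : ∑ i : I, |d (e.symm i).1 (e.symm i).2| = ∑ s : Σ j, K j × L j, |d s.1 s.2| :=
    Fintype.sum_equiv e.symm _ _ (fun i => rfl)
  rw [hsum', ← Finset.univ_sigma_univ, Finset.sum_sigma]
  refine Finset.sum_congr rfl fun j _ => ?_
  have hper : ∀ k : K j, ∑ l : L j, |d j (k, l)|
      = |c j| * |(hX j).eigenvalues k| * ∑ l, |(hY j).eigenvalues l| := by
    intro k
    rw [Finset.mul_sum]
    exact Finset.sum_congr rfl fun l _ => by rw [hddef]; dsimp only; rw [abs_mul, abs_mul]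
  rw [Fintype.sum_prod_type]
  simp only [hper]
  rw [← Finset.sum_mul, ← Finset.mul_sum, mul_assoc]

lemma my_ptA_isHermitian {α β : Type*} {X : Matrix (α × β) (α × β) ℂ}
    (h : X.IsHermitian) : (ptA X).IsHermitian := by
  ext p q
  rw [Matrix.conjTranspose_apply]
  show star (X (p.1, q.2) (q.1, p.2)) = X (q.1, p.2) (p.1, q.2)
  exact h.apply _ _

lemma my_kappa_trace {m γ : Type*} [Fintype m] [DecidableEq m] [Fintype γ]
    (ρ : Matrix (m × γ) (m × γ) ℂ) :
    (Matrix.of fun r r' : m => ∑ c, ρ (r, c) (r', c)).trace = ρ.trace := by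
  rw [Matrix.trace, Matrix.trace]
  simp [Matrix.diag, Fintype.sum_prod_type]

lemma my_kappa_posSemidef {m γ : Type*} [Fintype m] [DecidableEq m] [Fintype γ] [DecidableEq γ]
    (ρ : Matrix (m × γ) (m × γ) ℂ) (h : ρ.PosSemidef) :
    (Matrix.of fun r r' : m => ∑ c, ρ (r, c) (r', c)).PosSemidef := by
  refine Matrix.posSemidef_iff_dotProduct_mulVec.mpr ⟨?_, ?_⟩
  · ext r r'
    rw [Matrix.conjTranspose_apply]
    show star (∑ c, ρ (r', c) (r, c)) = ∑ c, ρ (r, c) (r', c)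
    rw [star_sum]
    exact Finset.sum_congr rfl fun c _ => h.1.apply _ _
  · intro x
    have key2 : star x ⬝ᵥ ((Matrix.of fun r r' : m => ∑ c, ρ (r, c) (r', c)) *ᵥ x)
        = ∑ cc : γ, star (fun q : m × γ => if q.2 = cc then x q.1 else 0) ⬝ᵥ
            (ρ *ᵥ (fun q : m × γ => if q.2 = cc then x q.1 else 0)) := by
      simp only [dotProduct, Matrix.mulVec, Pi.star_apply, Matrix.of_apply,
        Fintype.sum_prod_type, apply_ite (star : ℂ → ℂ), star_zero, ite_mul, zero_mul,
        mul_ite, mul_zero, Finset.sum_ite_eq', Finset.mem_univ, if_true]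
      rw [Finset.sum_comm]
      refine Finset.sum_congr rfl fun r _ => ?_
      calc star (x r) * ∑ r', (∑ c, ρ (r, c) (r', c)) * x r'
          = ∑ r', ∑ c, star (x r) * (ρ (r, c) (r', c) * x r') := by
            rw [Finset.mul_sum]
            refine Finset.sum_congr rfl fun r' _ => ?_
            rw [Finset.sum_mul, Finset.mul_sum]
        _ = ∑ c, ∑ r', star (x r) * (ρ (r, c) (r', c) * x r') := Finset.sum_comm
        _ = ∑ c, star (x r) * ∑ r', ρ (r, c) (r', c) * x r' := by
            refine Finset.sum_congr rfl fun c _ => ?_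
            rw [Finset.mul_sum]
    rw [key2]
    exact Finset.sum_nonneg fun cc _ => h.dotProduct_mulVec_nonneg _

end MyHelpers

/-- If `ρ = Σ_j p_j ρ_{A B_L^j} ⊗ ρ_{B_R^j C}` with respect to a direct-sum
decomposition `H_B = ⊕_j H_{B_L^j} ⊗ H_{B_R^j}` (here realized as the sigma type
`B = Σ j, BL j × BR j`), then `E_{A:BC}(ρ) = E_{A:B}(Tr_C ρ)`. -/
theorem stmt_7 {J A C : Type*} {BL BR : J → Type*}
    [Fintype J] [DecidableEq J] [Fintype A] [Fintype C] [DecidableEq A] [DecidableEq C]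
    [∀ j, Fintype (BL j)] [∀ j, DecidableEq (BL j)]
    [∀ j, Fintype (BR j)] [∀ j, DecidableEq (BR j)]
    (p : J → ℝ) (hp : ∀ j, 0 ≤ p j) (hp1 : ∑ j, p j = 1)
    (ρ1 : ∀ j, Matrix (A × BL j) (A × BL j) ℂ)
    (ρ2 : ∀ j, Matrix (BR j × C) (BR j × C) ℂ)
    (h1 : ∀ j, IsDensityMatrix (ρ1 j)) (h2 : ∀ j, IsDensityMatrix (ρ2 j))
    (ρ : Matrix (A × (Σ j, BL j × BR j) × C) (A × (Σ j, BL j × BR j) × C) ℂ)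
    (hoff : ∀ (a a' : A) (c c' : C) (j j' : J) (x : BL j × BR j) (x' : BL j' × BR j'),
      j ≠ j' → ρ (a, ⟨j, x⟩, c) (a', ⟨j', x'⟩, c') = 0)
    (hblock : ∀ (a a' : A) (c c' : C) (j : J) (l l' : BL j) (r r' : BR j),
      ρ (a, ⟨j, (l, r)⟩, c) (a', ⟨j, (l', r')⟩, c')
        = (p j : ℂ) * ρ1 j (a, l) (a', l') * ρ2 j (r, c) (r', c')) :
    negE ρ = negE (traceOutC ρ) := by
  classical
  have hH1 : ∀ j, (ptA (ρ1 j)).IsHermitian := fun j => my_ptA_isHermitian (h1 j).1.1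
  have hκps : ∀ j, (Matrix.of fun r r' : BR j => ∑ c, ρ2 j (r, c) (r', c)).PosSemidef :=
    fun j => my_kappa_posSemidef (ρ2 j) (h2 j).1
  have hκtr : ∀ j, (Matrix.of fun r r' : BR j => ∑ c, ρ2 j (r, c) (r', c)).trace = 1 :=
    fun j => (my_kappa_trace (ρ2 j)).trans (h2 j).2
  let e1 : (Σ j, (A × BL j) × (BR j × C)) ≃ (A × (Σ j, BL j × BR j) × C) :=
    { toFun := fun s => (s.2.1.1, ⟨s.1, (s.2.1.2, s.2.2.1)⟩, s.2.2.2)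
      invFun := fun i => ⟨i.2.1.1, ((i.1, i.2.1.2.1), (i.2.1.2.2, i.2.2))⟩
      left_inv := fun ⟨j, ⟨⟨a, bl⟩, ⟨br, cc⟩⟩⟩ => rfl
      right_inv := fun ⟨a, ⟨j, ⟨bl, br⟩⟩, cc⟩ => rfl }
  let e2 : (Σ j, (A × BL j) × BR j) ≃ (A × (Σ j, BL j × BR j)) :=
    { toFun := fun s => (s.2.1.1, ⟨s.1, (s.2.1.2, s.2.2)⟩)
      invFun := fun i => ⟨i.2.1, ((i.1, i.2.2.1), i.2.2.2)⟩
      left_inv := fun ⟨j, ⟨⟨a, bl⟩, br⟩⟩ => rfl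
      right_inv := fun ⟨a, ⟨j, ⟨bl, br⟩⟩⟩ => rfl }
  have hd1 : ∀ (j : J) (k k' : A × BL j) (l l' : BR j × C),
      ptA ρ (e1 ⟨j, (k, l)⟩) (e1 ⟨j, (k', l')⟩)
        = (p j : ℂ) * ptA (ρ1 j) k k' * ρ2 j l l' := by
    rintro j ⟨a, bl⟩ ⟨a', bl'⟩ ⟨br, cc⟩ ⟨br', cc'⟩
    exact hblock a' a cc cc' j bl bl' br br'
  have ho1 : ∀ (j j' : J) (x : (A × BL j) × (BR j × C)) (x' : (A × BL j') × (BR j' × C)),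
      j ≠ j' → ptA ρ (e1 ⟨j, x⟩) (e1 ⟨j', x'⟩) = 0 := by
    rintro j j' ⟨⟨a, bl⟩, ⟨br, cc⟩⟩ ⟨⟨a', bl'⟩, ⟨br', cc'⟩⟩ hne
    exact hoff a' a cc cc' j j' (bl, br) (bl', br') hne
  have hd2 : ∀ (j : J) (k k' : A × BL j) (l l' : BR j),
      ptA (traceOutC ρ) (e2 ⟨j, (k, l)⟩) (e2 ⟨j, (k', l')⟩)
        = (p j : ℂ) * ptA (ρ1 j) k k'
            * (Matrix.of fun r r' : BR j => ∑ c, ρ2 j (r, c) (r', c)) l l' := by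
    rintro j ⟨a, bl⟩ ⟨a', bl'⟩ br br'
    show (∑ c, ρ (a', ⟨j, (bl, br)⟩, c) (a, ⟨j, (bl', br')⟩, c)) = _
    calc (∑ c, ρ (a', ⟨j, (bl, br)⟩, c) (a, ⟨j, (bl', br')⟩, c))
        = ∑ c, (p j : ℂ) * ρ1 j (a', bl) (a, bl') * ρ2 j (br, c) (br', c) :=
          Finset.sum_congr rfl fun c _ => hblock a' a c c j bl bl' br br'
      _ = (p j : ℂ) * ρ1 j (a', bl) (a, bl') * ∑ c, ρ2 j (br, c) (br', c) := by
          rw [Finset.mul_sum]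
      _ = _ := rfl
  have ho2 : ∀ (j j' : J) (x : (A × BL j) × BR j) (x' : (A × BL j') × BR j'),
      j ≠ j' → ptA (traceOutC ρ) (e2 ⟨j, x⟩) (e2 ⟨j', x'⟩) = 0 := by
    rintro j j' ⟨⟨a, bl⟩, br⟩ ⟨⟨a', bl'⟩, br'⟩ hne
    show (∑ c, ρ (a', ⟨j, (bl, br)⟩, c) (a, ⟨j', (bl', br')⟩, c)) = 0
    exact Finset.sum_eq_zero fun c _ => hoff a' a c c j j' (bl, br) (bl', br') hne
  have t1 := bigdiag e1 (ptA ρ) p (fun j => ptA (ρ1 j)) ρ2 hH1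
    (fun j => (h2 j).1.1) hd1 ho1
  have t2 := bigdiag e2 (ptA (traceOutC ρ)) p (fun j => ptA (ρ1 j))
    (fun j => Matrix.of fun r r' : BR j => ∑ c, ρ2 j (r, c) (r', c)) hH1
    (fun j => (hκps j).1) hd2 ho2
  have hone : ∀ j, ∑ l, |((h2 j).1.1).eigenvalues l| = 1 := fun j =>
    my_trace_of_diag (ρ2 j) (h2 j).1 (h2 j).2
  have hone2 : ∀ j, ∑ l, |((hκps j).1).eigenvalues l| = 1 := fun j =>
    my_trace_of_diag _ (hκps j) (hκtr j)
  have hfin : traceNorm (ptA ρ) = traceNorm (ptA (traceOutC ρ)) := by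
    rw [t1, t2]
    refine Finset.sum_congr rfl fun j _ => ?_
    rw [hone j, hone2 j]
  simp only [negE]
  rw [hfin]
end

section
/- For q ∈ ℂ with |q| < 1, the following product identity holds: ∏_{j≥1}(1+q^{j−1/2})²(1−q^j) = Σ_{n∈ℤ} q^{n²/2}, i.e., θ_3(τ) = ∏_{j>0}(1−q^j)(1+q^{j−1/2})² where q = e^{2πiτ}. -/
open Finset Filter Complex Topology

namespace JTP

noncomputable def den (Q : ℂ) (k : ℕ) : ℂ := ∏ i ∈ Finset.range k, (1 - Q ^ (i + 1))

lemma den_zero (Q : ℂ) : den Q 0 = 1 := by simp [den]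

lemma den_succ (Q : ℂ) (k : ℕ) : den Q (k + 1) = den Q k * (1 - Q ^ (k + 1)) := by
  simp [den, Finset.prod_range_succ]

lemma den_add (Q : ℂ) (a b : ℕ) :
    den Q (a + b) = den Q a * ∏ i ∈ Finset.range b, (1 - Q ^ (a + i + 1)) := by
  simp [den, Finset.prod_range_add, add_right_comm]

lemma factor_ne_zero {Q : ℂ} (hQ : ‖Q‖ < 1) (k : ℕ) : (1 : ℂ) - Q ^ (k + 1) ≠ 0 := by
  have h : ‖Q ^ (k + 1)‖ < 1 := by
    rw [norm_pow]
    exact pow_lt_one₀ (norm_nonneg _) hQ (Nat.succ_ne_zero k)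
  intro h0
  rw [sub_eq_zero] at h0
  rw [← h0] at h
  simp at h

lemma den_ne_zero {Q : ℂ} (hQ : ‖Q‖ < 1) (k : ℕ) : den Q k ≠ 0 :=
  Finset.prod_ne_zero_iff.2 fun i _ => factor_ne_zero hQ i

lemma prod_one_add_le_exp (x : ℕ → ℝ) (hx : ∀ i, 0 ≤ x i) (s : Finset ℕ) :
    ∏ i ∈ s, (1 + x i) ≤ Real.exp (∑ i ∈ s, x i) := by
  rw [Real.exp_sum]
  refine Finset.prod_le_prod (fun i _ => by linarith [hx i]) fun i _ => ?_
  have := Real.add_one_le_exp (x i)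
  linarith

lemma one_sub_sum_le_prod (x : ℕ → ℝ) (hx0 : ∀ i, 0 ≤ x i) (hx1 : ∀ i, x i ≤ 1)
    (s : Finset ℕ) : 1 - ∑ i ∈ s, x i ≤ ∏ i ∈ s, (1 - x i) := by
  classical
  induction s using Finset.induction with
  | empty => simp
  | @insert a t hnot ih =>
    rw [Finset.prod_insert hnot, Finset.sum_insert hnot]
    have hp : (0:ℝ) ≤ ∏ i ∈ t, (1 - x i) :=
      Finset.prod_nonneg fun i _ => by linarith [hx1 i]
    have hs : (0:ℝ) ≤ ∑ i ∈ t, x i := Finset.sum_nonneg fun i _ => hx0 i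
    nlinarith [hx0 a, hx1 a]

lemma norm_prod_one_add_sub_one_le (z : ℕ → ℂ) (s : Finset ℕ) :
    ‖(∏ i ∈ s, (1 + z i)) - 1‖ ≤ (∏ i ∈ s, (1 + ‖z i‖)) - 1 := by
  classical
  induction s using Finset.induction with
  | empty => simp
  | @insert a t hnot ih =>
    rw [Finset.prod_insert hnot, Finset.prod_insert hnot]
    have key : (1 + z a) * ∏ i ∈ t, (1 + z i) - 1
        = (1 + z a) * ((∏ i ∈ t, (1 + z i)) - 1) + z a := by ring
    rw [key]
    have h1 : ‖(1 + z a) * ((∏ i ∈ t, (1 + z i)) - 1)‖ ≤ (1 + ‖z a‖) * ((∏ i ∈ t, (1 + ‖z i‖)) - 1) := by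
      rw [norm_mul]
      refine mul_le_mul ?_ ih (norm_nonneg _) (by positivity)
      calc ‖1 + z a‖ ≤ ‖(1:ℂ)‖ + ‖z a‖ := norm_add_le _ _
        _ = 1 + ‖z a‖ := by simp
    calc ‖(1 + z a) * ((∏ i ∈ t, (1 + z i)) - 1) + z a‖
        ≤ ‖(1 + z a) * ((∏ i ∈ t, (1 + z i)) - 1)‖ + ‖z a‖ := norm_add_le _ _
      _ ≤ (1 + ‖z a‖) * ((∏ i ∈ t, (1 + ‖z i‖)) - 1) + ‖z a‖ := by linarith
      _ = (1 + ‖z a‖) * ∏ i ∈ t, (1 + ‖z i‖) - 1 := by ring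


noncomputable def c (w : ℂ) (N : ℕ) (m : ℤ) : ℂ :=
  if m.natAbs ≤ N then
    w ^ (m.natAbs ^ 2) *
      (den (w ^ 2) (2 * N) / (den (w ^ 2) (N + m.natAbs) * den (w ^ 2) (N - m.natAbs)))
  else 0

lemma c_natAbs (w : ℂ) (N : ℕ) {m m' : ℤ} (h : m.natAbs = m'.natAbs) :
    c w N m = c w N m' := by simp [c, h]

lemma c_coe' (w : ℂ) (N k y : ℕ) (h : N = k + y) :
    c w N ((k : ℤ)) = w ^ (k ^ 2) *
      (den (w ^ 2) (2 * N) / (den (w ^ 2) (N + k) * den (w ^ 2) y)) := by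
  have h1 : (k : ℤ).natAbs = k := Int.natAbs_natCast k
  have h2 : N - k = y := by omega
  rw [c, if_pos (by omega), h1, h2]

lemma c_big (w : ℂ) {N : ℕ} {m : ℤ} (h : N < m.natAbs) : c w N m = 0 := by
  rw [c, if_neg]; omega


lemma c_rec (w : ℂ) (hw : ‖w‖ < 1) (N : ℕ) (m : ℤ) :
    c w (N + 1) m = (1 + w ^ (4 * N + 2)) * c w N m
      + w ^ (2 * N + 1) * (c w N (m - 1) + c w N (m + 1)) := by
  have hQ : ‖w ^ 2‖ < 1 := by
    rw [norm_pow]; exact pow_lt_one₀ (norm_nonneg _) hw two_ne_zero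
  have hd := den_ne_zero hQ
  have hf := factor_ne_zero hQ
  -- reduce to m ≥ 0
  have key : ∀ p : ℕ, c w (N + 1) (p : ℤ) = (1 + w ^ (4 * N + 2)) * c w N p
      + w ^ (2 * N + 1) * (c w N ((p : ℤ) - 1) + c w N ((p : ℤ) + 1)) := by
    intro m
    rcases lt_trichotomy m N with h | rfl | h
    · -- m < N
      obtain ⟨d, rfl⟩ : ∃ d, N = m + d + 1 := ⟨N - m - 1, by omega⟩
      cases m with
      | zero =>
        simp only [Nat.zero_add] at h ⊢
        have e1 : c w (d + 1 + 1) ((0 : ℕ) : ℤ) = 1 *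
            (den (w ^ 2) (2 * (d + 2)) / (den (w ^ 2) (d + 2) * den (w ^ 2) (d + 2))) := by
          simpa using c_coe' w (d + 2) 0 (d + 2) (by omega)
        have e2 : c w (d + 1) ((0 : ℕ) : ℤ) = 1 *
            (den (w ^ 2) (2 * (d + 1)) / (den (w ^ 2) (d + 1) * den (w ^ 2) (d + 1))) := by
          simpa using c_coe' w (d + 1) 0 (d + 1) (by omega)
        have e3 : c w (d + 1) (((0 : ℕ) : ℤ) - 1) = c w (d + 1) ((1 : ℕ) : ℤ) :=
          c_natAbs w _ (by omega)
        have e4 : c w (d + 1) (((0 : ℕ) : ℤ) + 1) = c w (d + 1) ((1 : ℕ) : ℤ) :=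
          c_natAbs w _ (by omega)
        have e5 : c w (d + 1) ((1 : ℕ) : ℤ) = w ^ 1 *
            (den (w ^ 2) (2 * (d + 1)) / (den (w ^ 2) (d + 2) * den (w ^ 2) d)) := by
          simpa using c_coe' w (d + 1) 1 d (by omega)
        have E1 : den (w ^ 2) (2 * (d + 2)) = den (w ^ 2) (2 * (d + 1))
            * (1 - (w ^ 2) ^ (2 * d + 3)) * (1 - (w ^ 2) ^ (2 * d + 4)) := by
          rw [show 2 * (d + 2) = (2 * d + 3) + 1 from by omega, den_succ,
            show 2 * d + 3 = (2 * d + 2) + 1 from by omega, den_succ,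
            show 2 * d + 2 = 2 * (d + 1) from by omega]
          ring_nf
        have E2 : den (w ^ 2) (d + 2) = den (w ^ 2) d
            * (1 - (w ^ 2) ^ (d + 1)) * (1 - (w ^ 2) ^ (d + 2)) := by
          rw [show d + 2 = (d + 1) + 1 from rfl, den_succ, den_succ]
        have E3 : den (w ^ 2) (d + 1) = den (w ^ 2) d * (1 - (w ^ 2) ^ (d + 1)) := den_succ _ _
        rw [e1, e2, e3, e4, e5]
        field_simp [hd]
        rw [E1, E2, E3]
        ring
      | succ p =>
        simp only [show p + 1 + d + 1 = p + d + 2 from by omega] at h ⊢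
        have g3 : (((p+1:ℕ)):ℤ) - 1 = ((p:ℕ):ℤ) := by push_cast; ring
        have g4 : (((p+1:ℕ)):ℤ) + 1 = ((p+2:ℕ):ℤ) := by push_cast; ring
        rw [g3, g4, c_coe' w (p+d+2+1) (p+1) (d+2) (by omega),
          c_coe' w (p+d+2) (p+1) (d+1) (by omega),
          c_coe' w (p+d+2) p (d+2) (by omega),
          c_coe' w (p+d+2) (p+2) d (by omega)]
        simp only [show 2*(p+d+2+1) = 2*p+2*d+6 from by omega,
          show (p+d+2+1)+(p+1) = 2*p+d+4 from by omega,
          show 2*(p+d+2) = 2*p+2*d+4 from by omega,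
          show (p+d+2)+(p+1) = 2*p+d+3 from by omega,
          show (p+d+2)+p = 2*p+d+2 from by omega,
          show (p+d+2)+(p+2) = 2*p+d+4 from by omega]
        have E1 : den (w ^ 2) (2*p+2*d+6) = den (w ^ 2) (2*p+2*d+4)
            * (1 - (w ^ 2) ^ (2*p+2*d+5)) * (1 - (w ^ 2) ^ (2*p+2*d+6)) := by
          rw [show 2*p+2*d+6 = (2*p+2*d+5) + 1 from by omega, den_succ,
            show 2*p+2*d+5 = (2*p+2*d+4) + 1 from by omega, den_succ]
        have E2 : den (w ^ 2) (2*p+d+4) = den (w ^ 2) (2*p+d+2)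
            * (1 - (w ^ 2) ^ (2*p+d+3)) * (1 - (w ^ 2) ^ (2*p+d+4)) := by
          rw [show 2*p+d+4 = (2*p+d+3) + 1 from by omega, den_succ,
            show 2*p+d+3 = (2*p+d+2) + 1 from by omega, den_succ]
        have E3 : den (w ^ 2) (2*p+d+3) = den (w ^ 2) (2*p+d+2)
            * (1 - (w ^ 2) ^ (2*p+d+3)) := by
          rw [show 2*p+d+3 = (2*p+d+2) + 1 from by omega, den_succ]
        have E4 : den (w ^ 2) (d+2) = den (w ^ 2) d
            * (1 - (w ^ 2) ^ (d+1)) * (1 - (w ^ 2) ^ (d+2)) := by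
          rw [show d + 2 = (d + 1) + 1 from rfl, den_succ, den_succ]
        have E5 : den (w ^ 2) (d+1) = den (w ^ 2) d * (1 - (w ^ 2) ^ (d+1)) := den_succ _ _
        field_simp [hd]
        rw [E1, E2, E3, E4, E5]
        ring
    · -- m = N
      cases m with
      | zero =>
        rw [c_coe' w 1 0 1 (by omega), c_coe' w 0 0 0 (by omega),
          c_big w (show 0 < (((0:ℕ):ℤ) - 1).natAbs by omega),
          c_big w (show 0 < (((0:ℕ):ℤ) + 1).natAbs by omega)]
        have E1 : den (w ^ 2) (2*1) = den (w ^ 2) 0 * (1 - (w ^ 2) ^ 1) * (1 - (w ^ 2) ^ 2) := by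
          rw [show 2*1 = 1 + 1 from rfl, den_succ, show (1:ℕ) = 0 + 1 from rfl, den_succ]
        have E2 : den (w ^ 2) 1 = den (w ^ 2) 0 * (1 - (w ^ 2) ^ 1) := by
          rw [show (1:ℕ) = 0 + 1 from rfl, den_succ]
        field_simp [hd]
        rw [E1, E2, den_zero]
        ring
      | succ p =>
        have g3 : (((p+1:ℕ)):ℤ) - 1 = ((p:ℕ):ℤ) := by push_cast; ring
        rw [g3, c_coe' w (p+1+1) (p+1) 1 (by omega),
          c_coe' w (p+1) (p+1) 0 (by omega),
          c_coe' w (p+1) p 1 (by omega),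
          c_big w (show p+1 < ((((p+1:ℕ)):ℤ) + 1).natAbs by omega)]
        simp only [show 2*(p+1+1) = 2*p+4 from by omega,
          show (p+1+1)+(p+1) = 2*p+3 from by omega,
          show 2*(p+1) = 2*p+2 from by omega,
          show (p+1)+(p+1) = 2*p+2 from by omega,
          show (p+1)+p = 2*p+1 from by omega]
        have E1 : den (w ^ 2) (2*p+4) = den (w ^ 2) (2*p+1)
            * (1 - (w ^ 2) ^ (2*p+2)) * (1 - (w ^ 2) ^ (2*p+3)) * (1 - (w ^ 2) ^ (2*p+4)) := by
          rw [show 2*p+4 = (2*p+3) + 1 from by omega, den_succ,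
            show 2*p+3 = (2*p+2) + 1 from by omega, den_succ,
            show 2*p+2 = (2*p+1) + 1 from by omega, den_succ]
        have E2 : den (w ^ 2) (2*p+3) = den (w ^ 2) (2*p+1)
            * (1 - (w ^ 2) ^ (2*p+2)) * (1 - (w ^ 2) ^ (2*p+3)) := by
          rw [show 2*p+3 = (2*p+2) + 1 from by omega, den_succ,
            show 2*p+2 = (2*p+1) + 1 from by omega, den_succ]
        have E3 : den (w ^ 2) (2*p+2) = den (w ^ 2) (2*p+1) * (1 - (w ^ 2) ^ (2*p+2)) := by
          rw [show 2*p+2 = (2*p+1) + 1 from by omega, den_succ]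
        have E4 : den (w ^ 2) 1 = den (w ^ 2) 0 * (1 - (w ^ 2) ^ 1) := by
          rw [show (1:ℕ) = 0 + 1 from rfl, den_succ]
        field_simp [hd]
        rw [E1, E2, E3, E4, den_zero]
        ring
    · -- N < m
      rcases Nat.lt_or_ge (N+1) m with h2 | h2
      · -- m ≥ N + 2 : everything is 0
        rw [c_big w (show N+1 < ((m:ℕ):ℤ).natAbs by omega),
          c_big w (show N < ((m:ℕ):ℤ).natAbs by omega),
          c_big w (show N < (((m:ℕ):ℤ) - 1).natAbs by omega),
          c_big w (show N < (((m:ℕ):ℤ) + 1).natAbs by omega)]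
        ring
      · -- m = N + 1
        obtain rfl : m = N + 1 := by omega
        have g3 : (((N+1:ℕ)):ℤ) - 1 = ((N:ℕ):ℤ) := by push_cast; ring
        rw [g3, c_coe' w (N+1) (N+1) 0 (by omega),
          c_coe' w N N 0 (by omega),
          c_big w (show N < (((N+1:ℕ)):ℤ).natAbs by omega),
          c_big w (show N < ((((N+1:ℕ)):ℤ) + 1).natAbs by omega)]
        simp only [show (N+1)+(N+1) = 2*(N+1) from by omega, show N+N = 2*N from by omega,
          den_zero]
        field_simp [hd]
        ring
  obtain ⟨p, rfl | rfl⟩ := m.eq_nat_or_neg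
  · exact key p
  · have e1 : c w (N + 1) (-(p : ℤ)) = c w (N + 1) (p : ℤ) := c_natAbs w _ (by simp)
    have e2 : c w N (-(p : ℤ)) = c w N (p : ℤ) := c_natAbs w _ (by simp)
    have e3 : c w N (-(p : ℤ) - 1) = c w N ((p : ℤ) + 1) := c_natAbs w _ (by omega)
    have e4 : c w N (-(p : ℤ) + 1) = c w N ((p : ℤ) - 1) := c_natAbs w _ (by omega)
    rw [e1, e2, e3, e4, key p]
    ring


lemma summable_c (w : ℂ) (N : ℕ) : Summable (c w N) :=
  summable_of_ne_finset_zero (s := Finset.Icc (-(N:ℤ)) N) (by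
    intro m hm
    apply c_big
    simp only [Finset.mem_Icc, not_and_or, not_le] at hm
    omega)

lemma prod_eq_tsum_c (w : ℂ) (hw : ‖w‖ < 1) (N : ℕ) :
    ∏ j ∈ Finset.range N, (1 + w ^ (2 * j + 1)) ^ 2 = ∑' m : ℤ, c w N m := by
  induction N with
  | zero =>
    rw [Finset.range_zero, Finset.prod_empty, tsum_eq_single (0 : ℤ)]
    · simp [c, den]
    · intro m hm
      exact c_big w (by omega)
  | succ N ih =>
    have hsh1 : Summable fun m : ℤ => c w N (m - 1) :=
      summable_of_ne_finset_zero (s := Finset.Icc (-(N:ℤ) - 1) (N + 1)) (by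
        intro m hm
        apply c_big
        simp only [Finset.mem_Icc, not_and_or, not_le] at hm
        omega)
    have hsh2 : Summable fun m : ℤ => c w N (m + 1) :=
      summable_of_ne_finset_zero (s := Finset.Icc (-(N:ℤ) - 1) (N + 1)) (by
        intro m hm
        apply c_big
        simp only [Finset.mem_Icc, not_and_or, not_le] at hm
        omega)
    have tsh1 : ∑' m : ℤ, c w N (m - 1) = ∑' m : ℤ, c w N m := by
      simpa using (Equiv.subRight (1 : ℤ)).tsum_eq (c w N)
    have tsh2 : ∑' m : ℤ, c w N (m + 1) = ∑' m : ℤ, c w N m := by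
      simpa using (Equiv.addRight (1 : ℤ)).tsum_eq (c w N)
    calc ∏ j ∈ Finset.range (N + 1), (1 + w ^ (2 * j + 1)) ^ 2
        = (∑' m : ℤ, c w N m) * (1 + w ^ (2 * N + 1)) ^ 2 := by
          rw [Finset.prod_range_succ, ih]
      _ = (1 + w ^ (4 * N + 2)) * (∑' m : ℤ, c w N m)
          + w ^ (2 * N + 1) * ((∑' m : ℤ, c w N (m - 1)) + ∑' m : ℤ, c w N (m + 1)) := by
          rw [tsh1, tsh2]; ring
      _ = ∑' m : ℤ, ((1 + w ^ (4 * N + 2)) * c w N m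
          + w ^ (2 * N + 1) * (c w N (m - 1) + c w N (m + 1))) := by
          rw [Summable.tsum_add ((summable_c w N).mul_left _) ((hsh1.add hsh2).mul_left _),
            tsum_mul_left, tsum_mul_left, Summable.tsum_add hsh1 hsh2]
      _ = ∑' m : ℤ, c w (N + 1) m := by
          exact tsum_congr fun m => (c_rec w hw N m).symm


-- sum of a geometric block
lemma geom_block_le {r : ℝ} (h0 : 0 ≤ r) (h1 : r < 1) (M K : ℕ) :
    ∑ i ∈ Finset.range K, r ^ (M + i + 1) ≤ r ^ (M + 1) * (1 - r)⁻¹ := by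
  have h2 : ∀ i, r ^ (M + i + 1) = r ^ (M + 1) * r ^ i := fun i => by ring
  simp only [h2, ← Finset.mul_sum]
  have h3 : ∑ i ∈ Finset.range K, r ^ i ≤ (1 - r)⁻¹ := by
    rw [← tsum_geometric_of_lt_one h0 h1]
    exact (summable_geometric_of_lt_one h0 h1).sum_le_tsum _ (fun i _ => pow_nonneg h0 i)
  have h4 : (0:ℝ) ≤ r ^ (M + 1) := pow_nonneg h0 _
  calc r ^ (M+1) * ∑ i ∈ Finset.range K, r ^ i ≤ r ^ (M+1) * (1-r)⁻¹ :=
    mul_le_mul_of_nonneg_left h3 h4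

lemma norm_den_le {Q : ℂ} (hQ : ‖Q‖ < 1) (k : ℕ) :
    ‖den Q k‖ ≤ Real.exp (‖Q‖ / (1 - ‖Q‖)) := by
  have h0 : (0:ℝ) ≤ ‖Q‖ := norm_nonneg _
  calc ‖den Q k‖ ≤ ∏ i ∈ Finset.range k, ‖(1:ℂ) - Q ^ (i+1)‖ := norm_prod_le _ _
    _ ≤ ∏ i ∈ Finset.range k, (1 + ‖Q‖ ^ (i+1)) := by
        refine Finset.prod_le_prod (fun i _ => norm_nonneg _) fun i _ => ?_
        calc ‖(1:ℂ) - Q ^ (i+1)‖ ≤ ‖(1:ℂ)‖ + ‖Q ^ (i+1)‖ := norm_sub_le _ _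
          _ = 1 + ‖Q‖ ^ (i+1) := by simp
    _ ≤ Real.exp (∑ i ∈ Finset.range k, ‖Q‖ ^ (i+1)) :=
        prod_one_add_le_exp _ (fun i => pow_nonneg h0 _) _
    _ ≤ Real.exp (‖Q‖ / (1 - ‖Q‖)) := by
        apply Real.exp_le_exp.mpr
        have := geom_block_le h0 hQ 0 k
        simp only [Nat.zero_add, pow_one] at this
        calc ∑ i ∈ Finset.range k, ‖Q‖ ^ (i+1)
            = ∑ i ∈ Finset.range k, ‖Q‖ ^ (0 + i + 1) := by norm_num
          _ ≤ ‖Q‖ ^ (0+1) * (1 - ‖Q‖)⁻¹ := geom_block_le h0 hQ 0 k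
          _ = ‖Q‖ / (1 - ‖Q‖) := by rw [div_eq_mul_inv]; norm_num

lemma real_prod_lb {r : ℝ} (h0 : 0 ≤ r) (h1 : r < 1) :
    ∃ δ : ℝ, 0 < δ ∧ ∀ k, δ ≤ ∏ i ∈ Finset.range k, (1 - r ^ (i+1)) := by
  have hfac : ∀ i : ℕ, 0 < 1 - r ^ (i+1) := fun i => by
    have : r ^ (i+1) < 1 := pow_lt_one₀ h0 h1 (Nat.succ_ne_zero i)
    linarith
  obtain ⟨N₀, hN₀⟩ := ((tendsto_pow_atTop_nhds_zero_of_lt_one h0 h1).eventually_lt_const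
    (show (0:ℝ) < (1 - r)/2 by linarith)).exists
  refine ⟨(∏ i ∈ Finset.range N₀, (1 - r ^ (i+1))) * (1/2),
    mul_pos (Finset.prod_pos fun i _ => hfac i) one_half_pos, fun k => ?_⟩
  rcases le_or_gt k N₀ with hk | hk
  · have h2 : ∏ i ∈ Finset.range N₀, (1 - r ^ (i+1)) ≤ ∏ i ∈ Finset.range k, (1 - r ^ (i+1)) := by
      rw [show N₀ = k + (N₀ - k) by omega, Finset.prod_range_add]
      have h3 : ∏ i ∈ Finset.range (N₀ - k), (1 - r ^ (k + i + 1)) ≤ 1 :=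
        Finset.prod_le_one (fun i _ => (hfac _).le) (fun i _ => by
          have : 0 ≤ r ^ (k + i + 1) := pow_nonneg h0 _
          linarith)
      have h4 : 0 < ∏ i ∈ Finset.range k, (1 - r ^ (i+1)) :=
        Finset.prod_pos fun i _ => hfac i
      calc (∏ i ∈ Finset.range k, (1 - r ^ (i+1))) * ∏ i ∈ Finset.range (N₀-k), (1 - r ^ (k+i+1))
          ≤ (∏ i ∈ Finset.range k, (1 - r ^ (i+1))) * 1 := by
            exact mul_le_mul_of_nonneg_left h3 h4.le
        _ = ∏ i ∈ Finset.range k, (1 - r ^ (i+1)) := mul_one _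
    have h5 : 0 < ∏ i ∈ Finset.range N₀, (1 - r ^ (i+1)) := Finset.prod_pos fun i _ => hfac i
    nlinarith
  · rw [show k = N₀ + (k - N₀) by omega, Finset.prod_range_add]
    have h6 : 1 - ∑ i ∈ Finset.range (k - N₀), r ^ (N₀ + i + 1)
        ≤ ∏ i ∈ Finset.range (k - N₀), (1 - r ^ (N₀ + i + 1)) := by
      have := one_sub_sum_le_prod (fun i => r ^ (N₀ + i + 1))
        (fun i => pow_nonneg h0 _) (fun i => by
          have : r ^ (N₀ + i + 1) < 1 := pow_lt_one₀ h0 h1 (by omega)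
          linarith) (Finset.range (k - N₀))
      simpa using this
    have h7 : ∑ i ∈ Finset.range (k - N₀), r ^ (N₀ + i + 1) ≤ 1/2 := by
      calc ∑ i ∈ Finset.range (k - N₀), r ^ (N₀ + i + 1) ≤ r ^ (N₀+1) * (1-r)⁻¹ :=
            geom_block_le h0 h1 N₀ _
        _ ≤ ((1-r)/2) * (1-r)⁻¹ := by
            have h8 : r ^ (N₀+1) ≤ r ^ N₀ :=
              pow_le_pow_of_le_one h0 h1.le (by omega)
            have h9 : (0:ℝ) < (1-r)⁻¹ := by
              apply inv_pos.mpr; linarith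
            nlinarith
        _ = 1/2 := by
            have h1r : (1:ℝ)-r ≠ 0 := by linarith
            field_simp
    have h10 : 0 < ∏ i ∈ Finset.range N₀, (1 - r ^ (i+1)) := Finset.prod_pos fun i _ => hfac i
    have h11 : (1:ℝ)/2 ≤ ∏ i ∈ Finset.range (k - N₀), (1 - r ^ (N₀ + i + 1)) := by linarith
    nlinarith

lemma exists_den_lb {Q : ℂ} (hQ : ‖Q‖ < 1) :
    ∃ δ : ℝ, 0 < δ ∧ ∀ k, δ ≤ ‖den Q k‖ := by
  obtain ⟨δ, hδ, h⟩ := real_prod_lb (norm_nonneg Q) hQ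
  refine ⟨δ, hδ, fun k => (h k).trans ?_⟩
  rw [den, norm_prod]
  refine Finset.prod_le_prod (fun i _ => ?_) fun i _ => ?_
  · have : ‖Q‖ ^ (i+1) < 1 := pow_lt_one₀ (norm_nonneg _) hQ (Nat.succ_ne_zero i)
    linarith
  · calc 1 - ‖Q‖ ^ (i+1) = ‖(1:ℂ)‖ - ‖Q ^ (i+1)‖ := by simp
      _ ≤ ‖(1:ℂ) - Q ^ (i+1)‖ := norm_sub_norm_le _ _

lemma tail_est {Q : ℂ} (hQ : ‖Q‖ < 1) (M K : ℕ) :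
    ‖(∏ i ∈ Finset.range K, (1 - Q ^ (M + i + 1))) - 1‖
      ≤ Real.exp (‖Q‖ ^ (M+1) * (1 - ‖Q‖)⁻¹) - 1 := by
  have h0 : (0:ℝ) ≤ ‖Q‖ := norm_nonneg _
  have h1 := norm_prod_one_add_sub_one_le (fun i => -(Q ^ (M + i + 1))) (Finset.range K)
  simp only [← sub_eq_add_neg, norm_neg, norm_pow] at h1
  calc ‖(∏ i ∈ Finset.range K, (1 - Q ^ (M + i + 1))) - 1‖
      ≤ (∏ i ∈ Finset.range K, (1 + ‖Q‖ ^ (M + i + 1))) - 1 := h1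
    _ ≤ Real.exp (∑ i ∈ Finset.range K, ‖Q‖ ^ (M + i + 1)) - 1 := by
        have := prod_one_add_le_exp (fun i => ‖Q‖ ^ (M + i + 1))
          (fun i => pow_nonneg h0 _) (Finset.range K)
        linarith
    _ ≤ Real.exp (‖Q‖ ^ (M+1) * (1 - ‖Q‖)⁻¹) - 1 := by
        have := Real.exp_le_exp.mpr (geom_block_le h0 hQ M K)
        linarith


lemma hQnorm {w : ℂ} (hw : ‖w‖ < 1) : ‖w ^ 2‖ < 1 := by
  rw [norm_pow]; exact pow_lt_one₀ (norm_nonneg _) hw two_ne_zero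

-- the quantity exp(r^{u N + 1}/(1-r)) - 1 tends to 0 whenever u N → ∞
lemma aux_exp_tendsto {r : ℝ} (h0 : 0 ≤ r) (h1 : r < 1) (u : ℕ → ℕ)
    (hu : Tendsto u atTop atTop) :
    Tendsto (fun N => Real.exp (r ^ (u N + 1) * (1 - r)⁻¹) - 1) atTop (𝓝 0) := by
  have h2 : Tendsto (fun N => r ^ (u N + 1)) atTop (𝓝 0) := by
    have h2' : Tendsto (fun N => r ^ (u N) * r) atTop (𝓝 0) := by
      have := ((tendsto_pow_atTop_nhds_zero_of_lt_one h0 h1).comp hu).mul_const r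
      simpa using this
    simpa [pow_succ] using h2'
  have h3 : Tendsto (fun x : ℝ => Real.exp (x * (1 - r)⁻¹) - 1) (𝓝 0) (𝓝 0) := by
    have hc : Continuous fun x : ℝ => Real.exp (x * (1 - r)⁻¹) - 1 := by continuity
    have := hc.tendsto 0
    simpa using this
  exact h3.comp h2

-- a product over `range K` of terms (1 - Q^{M+i+1}) tends to 1, if M → ∞
lemma prod_tendsto_one {Q : ℂ} (hQ : ‖Q‖ < 1) (u v : ℕ → ℕ)
    (hu : Tendsto u atTop atTop) :
    Tendsto (fun N => ∏ i ∈ Finset.range (v N), (1 - Q ^ (u N + i + 1))) atTop (𝓝 1) := by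
  rw [tendsto_iff_norm_sub_tendsto_zero]
  apply squeeze_zero (fun N => norm_nonneg _)
    (fun N => tail_est hQ (u N) (v N))
  exact aux_exp_tendsto (norm_nonneg Q) hQ u hu

lemma tendsto_cden (w : ℂ) (hw : ‖w‖ < 1) (m : ℤ) :
    Tendsto (fun N => c w N m * den (w ^ 2) N) atTop (𝓝 (w ^ (m.natAbs ^ 2))) := by
  set Q := w ^ 2 with hQdef
  have hQ : ‖Q‖ < 1 := hQnorm hw
  set a := m.natAbs with ha
  -- identify the function eventually
  have key : ∀ N, a ≤ N → c w N m * den Q N =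
      w ^ (a ^ 2) * ((∏ i ∈ Finset.range (N - a), (1 - Q ^ (N + a + i + 1)))
        * ∏ i ∈ Finset.range a, (1 - Q ^ (N - a + i + 1))) := by
    intro N hN
    have e1 : den Q (2 * N) = den Q (N + a) * ∏ i ∈ Finset.range (N - a),
        (1 - Q ^ (N + a + i + 1)) := by
      rw [← den_add, show N + a + (N - a) = 2 * N by omega]
    have e2 : den Q N = den Q (N - a) * ∏ i ∈ Finset.range a,
        (1 - Q ^ (N - a + i + 1)) := by
      rw [← den_add, show N - a + a = N by omega]
    rw [c, if_pos hN, ← ha, ← hQdef, e1, e2]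
    have h1 := den_ne_zero hQ (N + a)
    have h2 := den_ne_zero hQ (N - a)
    field_simp
  have h3 : Tendsto (fun N => w ^ (a ^ 2) *
      ((∏ i ∈ Finset.range (N - a), (1 - Q ^ (N + a + i + 1)))
        * ∏ i ∈ Finset.range a, (1 - Q ^ (N - a + i + 1)))) atTop (𝓝 (w ^ (a ^ 2))) := by
    have t1 : Tendsto (fun N => ∏ i ∈ Finset.range (N - a), (1 - Q ^ (N + a + i + 1)))
        atTop (𝓝 1) :=
      prod_tendsto_one hQ (fun N => N + a) (fun N => N - a)
        (tendsto_atTop_mono (fun N => Nat.le_add_right N a) tendsto_id)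
    have t2 : Tendsto (fun N => ∏ i ∈ Finset.range a, (1 - Q ^ (N - a + i + 1)))
        atTop (𝓝 1) :=
      prod_tendsto_one hQ (fun N => N - a) (fun _ => a) (tendsto_sub_atTop_nat a)
    have := (tendsto_const_nhds (x := w ^ (a ^ 2)) (f := atTop)).mul (t1.mul t2)
    simpa using this
  refine Tendsto.congr' ?_ h3
  filter_upwards [eventually_ge_atTop a] with N hN
  exact (key N hN).symm

lemma norm_cden_le (w : ℂ) (hw : ‖w‖ < 1) {δ : ℝ} (hδ : 0 < δ)
    (hlb : ∀ k, δ ≤ ‖den (w ^ 2) k‖) (N : ℕ) (m : ℤ) :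
    ‖c w N m * den (w ^ 2) N‖ ≤
      Real.exp (‖w ^ 2‖ / (1 - ‖w ^ 2‖)) ^ 2 / δ ^ 2 * ‖w‖ ^ m.natAbs := by
  have hQ : ‖w ^ 2‖ < 1 := hQnorm hw
  set E := Real.exp (‖w ^ 2‖ / (1 - ‖w ^ 2‖)) with hE
  have hE0 : 0 < E := Real.exp_pos _
  by_cases hm : m.natAbs ≤ N
  · rw [c, if_pos hm]
    simp only [norm_mul, norm_div, norm_pow]
    have h1 : ‖w‖ ^ m.natAbs ^ 2 ≤ ‖w‖ ^ m.natAbs :=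
      pow_le_pow_of_le_one (norm_nonneg _) hw.le (Nat.le_self_pow two_ne_zero _)
    have l1 := hlb (N + m.natAbs)
    have l2 := hlb (N - m.natAbs)
    have u1 := norm_den_le hQ (2 * N)
    have u2 := norm_den_le hQ N
    have p1 : (0:ℝ) < ‖den (w ^ 2) (N + m.natAbs)‖ := lt_of_lt_of_le hδ l1
    have p2 : (0:ℝ) < ‖den (w ^ 2) (N - m.natAbs)‖ := lt_of_lt_of_le hδ l2
    have big : ‖w‖ ^ m.natAbs ^ 2 *
        (‖den (w ^ 2) (2 * N)‖ / (‖den (w ^ 2) (N + m.natAbs)‖ * ‖den (w ^ 2) (N - m.natAbs)‖)) *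
        ‖den (w ^ 2) N‖ ≤ ‖w‖ ^ m.natAbs * (E / (δ * δ)) * E := by
      gcongr
    have hring : ‖w‖ ^ m.natAbs * (E / (δ * δ)) * E = E ^ 2 / δ ^ 2 * ‖w‖ ^ m.natAbs := by
      ring
    linarith
  · rw [c, if_neg hm]
    simp only [zero_mul, norm_zero]
    positivity


lemma summable_natAbs_geo {w : ℂ} (hw : ‖w‖ < 1) :
    Summable (fun m : ℤ => ‖w‖ ^ m.natAbs) := by
  have geo : Summable (fun n : ℕ => ‖w‖ ^ n) :=
    summable_geometric_of_lt_one (norm_nonneg w) hw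
  exact Summable.of_nat_of_neg (by simpa using geo) (by simpa using geo)

theorem main (w : ℂ) (hw : ‖w‖ < 1) :
    (∏' j : ℕ, (1 + w ^ (2 * j + 1)) ^ 2 * (1 - w ^ (2 * (j + 1))))
      = ∑' n : ℤ, w ^ (n ^ 2) := by
  have hQ : ‖w ^ 2‖ < 1 := hQnorm hw
  set F : ℕ → ℂ := fun j => (1 + w ^ (2 * j + 1)) ^ 2 * (1 - w ^ (2 * (j + 1))) with hF
  -- nonvanishing of factors
  have hne1 : ∀ j : ℕ, (1 : ℂ) + w ^ (2 * j + 1) ≠ 0 := by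
    intro j h
    have h2 : ‖w ^ (2 * j + 1)‖ < 1 := by
      rw [norm_pow]; exact pow_lt_one₀ (norm_nonneg _) hw (by omega)
    have h3 : w ^ (2 * j + 1) = -1 := by linear_combination h
    rw [h3] at h2; simp at h2
  have hpm : ∀ j : ℕ, w ^ (2 * (j + 1)) = (w ^ 2) ^ (j + 1) := fun j => by
    rw [← pow_mul]
  have hne : ∀ j : ℕ, F j ≠ 0 := by
    intro j
    exact mul_ne_zero (pow_ne_zero 2 (hne1 j)) (by rw [hpm j]; exact factor_ne_zero hQ j)
  -- bound on F j - 1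
  have hFb : ∀ j : ℕ, ‖F j - 1‖ ≤ 7 * ‖w‖ ^ j := by
    intro j
    set x := w ^ (2 * j + 1) with hx
    set y := w ^ (2 * (j + 1)) with hy
    have e : F j - 1 = 2 * x + x ^ 2 - y - 2 * (x * y) - x ^ 2 * y := by rw [hF]; ring
    have hxj : ‖x‖ ≤ ‖w‖ ^ j := by
      rw [hx, norm_pow]
      exact pow_le_pow_of_le_one (norm_nonneg _) hw.le (by omega)
    have hyj : ‖y‖ ≤ ‖w‖ ^ j := by
      rw [hy, norm_pow]
      exact pow_le_pow_of_le_one (norm_nonneg _) hw.le (by omega)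
    have hx1 : ‖x‖ ≤ 1 := by
      rw [hx, norm_pow]; exact pow_le_one₀ (norm_nonneg _) hw.le
    have hy1 : ‖y‖ ≤ 1 := by
      rw [hy, norm_pow]; exact pow_le_one₀ (norm_nonneg _) hw.le
    have tri : ‖F j - 1‖ ≤ 2 * ‖x‖ + ‖x‖ ^ 2 + ‖y‖ + 2 * (‖x‖ * ‖y‖) + ‖x‖ ^ 2 * ‖y‖ := by
      rw [e]
      calc ‖2 * x + x ^ 2 - y - 2 * (x * y) - x ^ 2 * y‖
          ≤ ‖2 * x + x ^ 2 - y - 2 * (x * y)‖ + ‖x ^ 2 * y‖ := norm_sub_le _ _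
        _ ≤ (‖2 * x + x ^ 2 - y‖ + ‖2 * (x * y)‖) + ‖x ^ 2 * y‖ := by
            have := norm_sub_le (2 * x + x ^ 2 - y) (2 * (x * y)); linarith
        _ ≤ ((‖2 * x + x ^ 2‖ + ‖y‖) + ‖2 * (x * y)‖) + ‖x ^ 2 * y‖ := by
            have := norm_sub_le (2 * x + x ^ 2) y; linarith
        _ ≤ (((‖2 * x‖ + ‖x ^ 2‖) + ‖y‖) + ‖2 * (x * y)‖) + ‖x ^ 2 * y‖ := by
            have := norm_add_le (2 * x) (x ^ 2); linarith
        _ = 2 * ‖x‖ + ‖x‖ ^ 2 + ‖y‖ + 2 * (‖x‖ * ‖y‖) + ‖x‖ ^ 2 * ‖y‖ := by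
            simp [norm_mul, norm_pow]
    have hx0 : (0:ℝ) ≤ ‖x‖ := norm_nonneg _
    have hy0 : (0:ℝ) ≤ ‖y‖ := norm_nonneg _
    nlinarith [mul_le_mul hxj hy1 hy0 (pow_nonneg (norm_nonneg w) j),
      mul_le_mul hxj hx1 hx0 (pow_nonneg (norm_nonneg w) j)]
  -- summability of logs and multipliability
  have hlog : Summable (fun j => Complex.log (F j)) := by
    apply Summable.of_norm_bounded_eventually_nat (g := fun j => 3 / 2 * (7 * ‖w‖ ^ j))
    · exact (((summable_geometric_of_lt_one (norm_nonneg w) hw).mul_left 7).mul_left (3 / 2))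
    · have htend : Tendsto (fun j : ℕ => 7 * ‖w‖ ^ j) atTop (𝓝 0) := by
        have := (tendsto_pow_atTop_nhds_zero_of_lt_one (norm_nonneg w) hw).const_mul (7:ℝ)
        simpa using this
      filter_upwards [htend.eventually_lt_const (show (0:ℝ) < 1/2 by norm_num)] with j hj
      have hz : ‖F j - 1‖ ≤ 1 / 2 := le_trans (hFb j) hj.le
      have hlg : ‖Complex.log (F j)‖ ≤ 3 / 2 * ‖F j - 1‖ := by
        rw [show F j = 1 + (F j - 1) from by ring]
        have := Complex.norm_log_one_add_half_le_self (z := F j - 1) (by simpa using hz)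
        simpa using this
      have := hFb j
      linarith
  have hmul : Multipliable F := by
    have := Complex.multipliable_of_summable_log hlog
    exact this
  -- partial products
  have hpp : ∀ N : ℕ, ∏ j ∈ Finset.range N, F j = ∑' m : ℤ, c w N m * den (w ^ 2) N := by
    intro N
    rw [hF, Finset.prod_mul_distrib, prod_eq_tsum_c w hw N, tsum_mul_right]
    congr 1
    rw [den]
    exact Finset.prod_congr rfl fun j _ => by rw [hpm j]
  have hP : Tendsto (fun N => ∏ j ∈ Finset.range N, F j) atTop (𝓝 (∏' j, F j)) :=
    hmul.hasProd.tendsto_prod_nat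
  -- dominated convergence
  obtain ⟨δ, hδ, hlb⟩ := exists_den_lb hQ
  have hT : Tendsto (fun N => ∑' m : ℤ, c w N m * den (w ^ 2) N) atTop
      (𝓝 (∑' m : ℤ, w ^ (m.natAbs ^ 2))) := by
    apply tendsto_tsum_of_dominated_convergence
      (bound := fun m : ℤ => Real.exp (‖w ^ 2‖ / (1 - ‖w ^ 2‖)) ^ 2 / δ ^ 2 * ‖w‖ ^ m.natAbs)
      ((summable_natAbs_geo hw).mul_left _)
      (tendsto_cden w hw)
    exact Eventually.of_forall fun N m => norm_cden_le w hw hδ hlb N m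
  have hPT : Tendsto (fun N => ∏ j ∈ Finset.range N, F j) atTop
      (𝓝 (∑' m : ℤ, w ^ (m.natAbs ^ 2))) := by
    refine hT.congr fun N => (hpp N).symm
  have hEq : (∏' j, F j) = ∑' m : ℤ, w ^ (m.natAbs ^ 2) := tendsto_nhds_unique hP hPT
  rw [hEq]
  refine (tsum_congr fun n => ?_).symm
  rw [← zpow_natCast w (n.natAbs ^ 2)]
  congr 1
  push_cast
  exact (_root_.sq_abs n).symm

end JTP

/-- Jacobi triple product specialization `θ₃`: writing the nome as `q = w²` (so that
`q^{1/2} = w`), one has `∏_{j≥1} (1+q^{j−1/2})² (1−q^j) = Σ_{n∈ℤ} q^{n²/2}`, i.e.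
`∏_{j≥1} (1+w^{2j−1})² (1−w^{2j}) = Σ_{n∈ℤ} w^{n²}` for `|w| < 1`. -/
theorem stmt_12 (w : ℂ) (hw : ‖w‖ < 1) :
    (∏' j : ℕ, (1 + w ^ (2 * j + 1)) ^ 2 * (1 - w ^ (2 * (j + 1))))
      = ∑' n : ℤ, w ^ (n ^ 2) := by
  exact JTP.main w hw
end

section
/- Let ρ be a density matrix on H_A ⊗ H_B of the block-diagonal form ρ = ⊕_a |ψ_a|² ρ_a, where the blocks are orthogonal and each ρ_a is a density matrix on a subspace of the form H_A^a ⊗ H_B^a. Then ‖ρ^{T_A}‖₁ = Σ_a |ψ_a|² ‖ρ_a^{T_A}‖₁, so E_{A:B}(ρ) = log Σ_a |ψ_a|² exp(E_{A:B}(ρ_a)). -/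
open scoped ComplexOrder

namespace StmtAux

open Matrix

variable {n : Type*} [Fintype n] [DecidableEq n]

open scoped MatrixOrder in
noncomputable def _root_.Matrix.PosSemidef.sqrt {A : Matrix n n ℂ} (_ : A.PosSemidef) :
    Matrix n n ℂ :=
  CFC.sqrt A

open scoped MatrixOrder in
lemma _root_.Matrix.PosSemidef.posSemidef_sqrt {A : Matrix n n ℂ} (hA : A.PosSemidef) :
    hA.sqrt.PosSemidef := (CFC.sqrt_nonneg A).posSemidef

open scoped MatrixOrder in
lemma _root_.Matrix.PosSemidef.sq_sqrt {A : Matrix n n ℂ} (hA : A.PosSemidef) :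
    hA.sqrt ^ 2 = A := CFC.sq_sqrt A hA.nonneg

open scoped MatrixOrder in
lemma _root_.Matrix.PosSemidef.eq_sqrt_of_sq_eq {B A : Matrix n n ℂ} (hB : B.PosSemidef)
    (hA : A.PosSemidef) (h : B ^ 2 = A) : B = hA.sqrt := by
  unfold Matrix.PosSemidef.sqrt
  rw [← h, CFC.sqrt_sq B hB.nonneg]

open scoped MatrixOrder in
lemma trace_sqrt {H : Matrix n n ℂ} (hH : H.PosSemidef) :
    hH.sqrt.trace = ((∑ i, Real.sqrt (hH.1.eigenvalues i) : ℝ) : ℂ) := by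
  rw [Matrix.PosSemidef.sqrt, CFC.sqrt_eq_cfc, cfc_nnreal_eq_real _ H, hH.1.cfc_eq,
    IsHermitian.cfc, Unitary.conjStarAlgAut_apply, Matrix.trace_mul_cycle,
    Matrix.mem_unitaryGroup_iff'.mp hH.1.eigenvectorUnitary.2, one_mul, Matrix.trace_diagonal]
  push_cast
  exact Finset.sum_congr rfl fun i _ => by
    simp [max_eq_left (hH.eigenvalues_nonneg i)]

lemma traceNorm_eq_trace (X S : Matrix n n ℂ) (hS : S.PosSemidef)
    (h : S ^ 2 = Xᴴ * X) : (traceNorm X : ℂ) = S.trace := by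
  rw [hS.eq_sqrt_of_sq_eq (Matrix.posSemidef_conjTranspose_mul_self X) h,
    trace_sqrt]
  rfl

lemma traceNorm_nonneg (X : Matrix n n ℂ) : 0 ≤ traceNorm X :=
  Finset.sum_nonneg fun _ _ => Real.sqrt_nonneg _

lemma traceNorm_zero : traceNorm (0 : Matrix n n ℂ) = 0 := by
  have := traceNorm_eq_trace (0 : Matrix n n ℂ) 0 Matrix.PosSemidef.zero (by simp)
  simpa using this

lemma traceNorm_pos (X : Matrix n n ℂ) (hX : X ≠ 0) : 0 < traceNorm X := by
  rcases (traceNorm_nonneg X).lt_or_eq with h | h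
  · exact h
  exfalso
  apply hX
  have h0 : ∀ i, (Matrix.isHermitian_conjTranspose_mul_self X).eigenvalues i = 0 := by
    have hz := h.symm
    rw [traceNorm] at hz
    intro i
    have hsq : Real.sqrt ((Matrix.isHermitian_conjTranspose_mul_self X).eigenvalues i) = 0 :=
      (Finset.sum_eq_zero_iff_of_nonneg (fun j _ => Real.sqrt_nonneg _)).mp hz i
        (Finset.mem_univ i)
    have := Matrix.eigenvalues_conjTranspose_mul_self_nonneg X i
    nlinarith [Real.sq_sqrt this, hsq]
  have hXX : Xᴴ * X = 0 := by
    have hst := (Matrix.isHermitian_conjTranspose_mul_self X).spectral_theorem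
    rw [hst]
    have : Matrix.diagonal (RCLike.ofReal ∘ (Matrix.isHermitian_conjTranspose_mul_self X).eigenvalues)
        = (0 : Matrix n n ℂ) := by
      rw [show RCLike.ofReal ∘ (Matrix.isHermitian_conjTranspose_mul_self X).eigenvalues
          = fun _ => (0 : ℂ) from funext fun i => by simp [h0 i], Matrix.diagonal_zero]
    rw [this, map_zero]
  exact Matrix.conjTranspose_mul_self_eq_zero.mp hXX

lemma traceNorm_smul (c : ℝ) (hc : 0 ≤ c) (X : Matrix n n ℂ) :
    traceNorm ((c : ℂ) • X) = c * traceNorm X := by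
  have h0 := Matrix.posSemidef_conjTranspose_mul_self X
  set S0 := h0.sqrt with hS0
  have hS0psd := h0.posSemidef_sqrt
  have hpsd : ((c : ℂ) • S0).PosSemidef := by
    refine Matrix.PosSemidef.of_dotProduct_mulVec_nonneg ?_ fun x => ?_
    · rw [Matrix.IsHermitian, Matrix.conjTranspose_smul, Complex.star_def,
        Complex.conj_ofReal, hS0psd.1]
    · rw [Matrix.smul_mulVec, dotProduct_smul, smul_eq_mul]
      exact mul_nonneg (by exact_mod_cast hc) (hS0psd.dotProduct_mulVec_nonneg x)
  have hsq : ((c : ℂ) • S0) ^ 2 = ((c : ℂ) • X)ᴴ * ((c : ℂ) • X) := by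
    rw [smul_pow, Matrix.conjTranspose_smul, Complex.star_def, Complex.conj_ofReal,
      Matrix.smul_mul, Matrix.mul_smul, smul_smul, h0.sq_sqrt, sq]
  have key := traceNorm_eq_trace ((c : ℂ) • X) _ hpsd hsq
  rw [Matrix.trace_smul, smul_eq_mul, ← traceNorm_eq_trace X S0 hS0psd h0.sq_sqrt] at key
  exact_mod_cast key

end StmtAux

namespace StmtAux

open Matrix

variable {n : Type*} [Fintype n] [DecidableEq n]

lemma traceNorm_submatrix {m : Type*} [Fintype m] [DecidableEq m] (e : m ≃ n)
    (X : Matrix n n ℂ) : traceNorm (X.submatrix e e) = traceNorm X := by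
  have h0 := Matrix.posSemidef_conjTranspose_mul_self X
  have hS0psd := h0.posSemidef_sqrt
  have hpsd : (h0.sqrt.submatrix e e).PosSemidef := hS0psd.submatrix e
  have hsq : (h0.sqrt.submatrix e e) ^ 2 = (X.submatrix e e)ᴴ * (X.submatrix e e) := by
    rw [sq, Matrix.conjTranspose_submatrix, Matrix.submatrix_mul_equiv,
      Matrix.submatrix_mul_equiv, ← sq, h0.sq_sqrt]
  have key := traceNorm_eq_trace _ _ hpsd hsq
  have htr : (h0.sqrt.submatrix e e).trace = h0.sqrt.trace := by
    rw [Matrix.trace, Matrix.trace]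
    exact Equiv.sum_comp e (fun j => h0.sqrt.diag j)
  rw [htr, ← traceNorm_eq_trace X _ hS0psd h0.sq_sqrt] at key
  exact_mod_cast key

lemma posSemidef_blockDiagonal' {ι : Type*} [Fintype ι] [DecidableEq ι]
    {m : ι → Type*} [∀ i, Fintype (m i)] [∀ i, DecidableEq (m i)]
    (M : ∀ i, Matrix (m i) (m i) ℂ) (hM : ∀ i, (M i).PosSemidef) :
    (Matrix.blockDiagonal' M).PosSemidef := by
  refine Matrix.PosSemidef.of_dotProduct_mulVec_nonneg ?_ fun x => ?_
  · rw [Matrix.IsHermitian, Matrix.blockDiagonal'_conjTranspose]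
    exact congrArg _ (funext fun i => (hM i).1)
  · have hmv : Matrix.blockDiagonal' M *ᵥ x
        = fun p => (M p.1 *ᵥ fun j => x ⟨p.1, j⟩) p.2 := by
      funext p
      obtain ⟨i, j⟩ := p
      show ∑ q, Matrix.blockDiagonal' M ⟨i, j⟩ q * x q = _
      rw [← Finset.univ_sigma_univ, Finset.sum_sigma]
      rw [Finset.sum_eq_single i]
      · simp [Matrix.mulVec, dotProduct]
      · intro i' _ hne
        apply Finset.sum_eq_zero
        intro j' _
        rw [Matrix.blockDiagonal'_apply_ne _ _ _ (Ne.symm hne), zero_mul]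
      · intro h; exact absurd (Finset.mem_univ i) h
    rw [hmv]
    have : star x ⬝ᵥ (fun p : Σ i, m i => (M p.1 *ᵥ fun j => x ⟨p.1, j⟩) p.2)
        = ∑ i, star (fun j => x ⟨i, j⟩) ⬝ᵥ (M i *ᵥ fun j => x ⟨i, j⟩) := by
      rw [dotProduct, ← Finset.univ_sigma_univ, Finset.sum_sigma]
      rfl
    rw [this]
    exact Finset.sum_nonneg fun i _ => (hM i).dotProduct_mulVec_nonneg _

lemma traceNorm_blockDiagonal' {ι : Type*} [Fintype ι] [DecidableEq ι]
    {m : ι → Type*} [∀ i, Fintype (m i)] [∀ i, DecidableEq (m i)]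
    (M : ∀ i, Matrix (m i) (m i) ℂ) :
    traceNorm (Matrix.blockDiagonal' M) = ∑ i, traceNorm (M i) := by
  have h0 := fun i => Matrix.posSemidef_conjTranspose_mul_self (M i)
  have hpsd := posSemidef_blockDiagonal' (fun i => (h0 i).sqrt)
    (fun i => (h0 i).posSemidef_sqrt)
  have hsq : (Matrix.blockDiagonal' fun i => (h0 i).sqrt) ^ 2
      = (Matrix.blockDiagonal' M)ᴴ * (Matrix.blockDiagonal' M) := by
    rw [Matrix.blockDiagonal'_conjTranspose, ← Matrix.blockDiagonal'_mul, sq,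
      ← Matrix.blockDiagonal'_mul]
    exact congrArg _ (funext fun i => by rw [← sq, (h0 i).sq_sqrt])
  have key := traceNorm_eq_trace _ _ hpsd hsq
  rw [Matrix.trace_blockDiagonal'] at key
  have : ∑ i, ((h0 i).sqrt).trace = ((∑ i, traceNorm (M i) : ℝ) : ℂ) := by
    push_cast
    exact Finset.sum_congr rfl fun i _ =>
      (traceNorm_eq_trace (M i) _ ((h0 i).posSemidef_sqrt) ((h0 i).sq_sqrt)).symm
  rw [this] at key
  exact_mod_cast key

end StmtAux

/-- For a block-diagonal state `ρ = ⊕_a |ψ_a|² ρ_a` with blocks of the form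
`H_A^a ⊗ H_B^a` (realized by sigma types), the trace norm of the partial transpose
decomposes as `‖ρ^{T_A}‖₁ = Σ_a |ψ_a|² ‖ρ_a^{T_A}‖₁`, hence
`E_{A:B}(ρ) = log Σ_a |ψ_a|² exp(E_{A:B}(ρ_a))`. -/
theorem stmt_15 {I : Type*} {HA HB : I → Type*} [Fintype I] [DecidableEq I]
    [∀ a, Fintype (HA a)] [∀ a, DecidableEq (HA a)]
    [∀ a, Fintype (HB a)] [∀ a, DecidableEq (HB a)]
    (ψ : I → ℂ) (hψ : ∑ a, ‖ψ a‖ ^ 2 = 1)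
    (ρa : ∀ a, Matrix (HA a × HB a) (HA a × HB a) ℂ)
    (hρa : ∀ a, IsDensityMatrix (ρa a))
    (ρ : Matrix ((Σ a, HA a) × (Σ a, HB a)) ((Σ a, HA a) × (Σ a, HB a)) ℂ)
    (hblock : ∀ (a : I) (x x' : HA a) (y y' : HB a),
      ρ (⟨a, x⟩, ⟨a, y⟩) (⟨a, x'⟩, ⟨a, y'⟩)
        = ((‖ψ a‖ : ℂ)) ^ 2 * ρa a (x, y) (x', y'))
    (hoff : ∀ (a b a' b' : I) (x : HA a) (y : HB b) (x' : HA a') (y' : HB b'),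
      ¬(a = b ∧ b = a' ∧ a' = b') →
      ρ (⟨a, x⟩, ⟨b, y⟩) (⟨a', x'⟩, ⟨b', y'⟩) = 0) :
    traceNorm (ptA ρ) = ∑ a, ‖ψ a‖ ^ 2 * traceNorm (ptA (ρa a)) ∧
    Real.log (traceNorm (ptA ρ))
      = Real.log (∑ a, ‖ψ a‖ ^ 2 *
          Real.exp (Real.log (traceNorm (ptA (ρa a))))) := by
  classical
  -- the reindexing equivalence
  let e : (Σ p : I × I, HA p.1 × HB p.2) ≃ ((Σ a, HA a) × (Σ b, HB b)) :=
    { toFun := fun q => (⟨q.1.1, q.2.1⟩, ⟨q.1.2, q.2.2⟩)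
      invFun := fun P => ⟨(P.1.1, P.2.1), (P.1.2, P.2.2)⟩
      left_inv := fun q => rfl
      right_inv := fun P => rfl }
  -- the blocks
  let M : ∀ p : I × I, Matrix (HA p.1 × HB p.2) (HA p.1 × HB p.2) ℂ := fun p =>
    Matrix.of fun u v => ptA ρ (⟨p.1, u.1⟩, ⟨p.2, u.2⟩) (⟨p.1, v.1⟩, ⟨p.2, v.2⟩)
  have hmat : ptA ρ = (Matrix.blockDiagonal' M).submatrix e.symm e.symm := by
    ext P Q
    obtain ⟨⟨a, x⟩, ⟨b, y⟩⟩ := P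
    obtain ⟨⟨a', x'⟩, ⟨b', y'⟩⟩ := Q
    show _ = Matrix.blockDiagonal' M ⟨(a, b), (x, y)⟩ ⟨(a', b'), (x', y')⟩
    by_cases h : ((a, b) : I × I) = (a', b')
    · rw [Prod.mk.injEq] at h
      obtain ⟨rfl, rfl⟩ := h
      rw [Matrix.blockDiagonal'_apply_eq]
      rfl
    · rw [Matrix.blockDiagonal'_apply_ne _ _ _ h]
      show ρ (⟨a', x'⟩, ⟨b, y⟩) (⟨a, x⟩, ⟨b', y'⟩) = 0
      apply hoff
      rintro ⟨rfl, rfl, rfl⟩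
      exact h rfl
  have hMdiag : ∀ a : I, M (a, a) = ((‖ψ a‖ ^ 2 : ℝ) : ℂ) • ptA (ρa a) := by
    intro a
    ext u v
    obtain ⟨x, y⟩ := u
    obtain ⟨x', y'⟩ := v
    show ρ (⟨a, x'⟩, ⟨a, y⟩) (⟨a, x⟩, ⟨a, y'⟩) = _
    rw [hblock a x' x y y']
    show _ = ((‖ψ a‖ ^ 2 : ℝ) : ℂ) * ρa a (x', y) (x, y')
    push_cast
    ring
  have hMoff : ∀ p : I × I, p.1 ≠ p.2 → M p = 0 := by
    rintro ⟨a, b⟩ hab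
    ext u v
    obtain ⟨x, y⟩ := u
    obtain ⟨x', y'⟩ := v
    show ρ (⟨a, x'⟩, ⟨b, y⟩) (⟨a, x⟩, ⟨b, y'⟩) = 0
    exact hoff a b a b x' y x y' (fun h => hab h.1)
  have h1 : traceNorm (ptA ρ) = ∑ a, ‖ψ a‖ ^ 2 * traceNorm (ptA (ρa a)) := by
    rw [hmat, StmtAux.traceNorm_submatrix, StmtAux.traceNorm_blockDiagonal', Fintype.sum_prod_type]
    refine Finset.sum_congr rfl fun a _ => ?_
    rw [Finset.sum_eq_single a]
    · rw [hMdiag a, StmtAux.traceNorm_smul _ (by positivity)]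
    · intro b _ hb
      rw [hMoff (a, b) (fun h => hb (by simpa using h.symm)), StmtAux.traceNorm_zero]
    · intro h; exact absurd (Finset.mem_univ a) h
  have hpos : ∀ a, 0 < traceNorm (ptA (ρa a)) := by
    intro a
    apply StmtAux.traceNorm_pos
    intro h0
    have htr : (ptA (ρa a)).trace = (ρa a).trace := by
      unfold Matrix.trace
      refine Finset.sum_congr rfl fun p _ => ?_
      show ptA (ρa a) p p = (ρa a) p p
      show (ρa a) (p.1, p.2) (p.1, p.2) = _
      rw [Prod.mk.eta]
    rw [h0, Matrix.trace_zero, (hρa a).2] at htr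
    exact one_ne_zero htr.symm
  refine ⟨h1, ?_⟩
  rw [h1]
  congr 1
  exact Finset.sum_congr rfl fun a _ => by rw [Real.exp_log (hpos a)]
end

section
/- Let λ : I → ℝ_{≥0} with Σ_{i∈I} λ_i² = 1 (I finite), and define the tripartite pure state |Ψ⟩ = Σ_{i,j} λ_i λ_j |i⟩_A ⊗ (|i⟩ ⊗ |j⟩)_B ⊗ |j⟩_C on H_A ⊗ (H_{B_L} ⊗ H_{B_R}) ⊗ H_C, with orthonormal families. Then E_{A:BC}(|Ψ⟩⟨Ψ|) = E_{A:B}(Tr_C |Ψ⟩⟨Ψ|) = 2 log Σ_i λ_i. -/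
open Matrix Finset Polynomial

lemma trace_pow_eig {n : Type*} [Fintype n] [DecidableEq n]
    {M : Matrix n n ℂ} (hM : M.IsHermitian) (m : ℕ) :
    (M ^ m).trace = ((∑ i, hM.eigenvalues i ^ m : ℝ) : ℂ) := by
  set U : Matrix n n ℂ := (hM.eigenvectorUnitary : Matrix n n ℂ)
  set D : Matrix n n ℂ := Matrix.diagonal (RCLike.ofReal ∘ hM.eigenvalues)
  have h4 : U * star U = 1 := Matrix.mem_unitaryGroup_iff.mp hM.eigenvectorUnitary.2
  have h5 : star U * U = 1 := Matrix.mem_unitaryGroup_iff'.mp hM.eigenvectorUnitary.2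
  have hpow : M ^ m = U * D ^ m * star U := by
    induction m with
    | zero => simp [pow_zero, h4]
    | succ m ih =>
      rw [pow_succ, ih, pow_succ]
      conv_lhs => rw [hM.spectral_theorem, Unitary.conjStarAlgAut_apply]
      simp only [Matrix.mul_assoc]
      rw [show star U * (U * (D * star U)) = D * star U by
        rw [← Matrix.mul_assoc, h5, Matrix.one_mul]]
  rw [hpow, Matrix.trace_mul_cycle, h5, Matrix.one_mul]
  rw [show D ^ m = Matrix.diagonal ((RCLike.ofReal ∘ hM.eigenvalues) ^ m) from Matrix.diagonal_pow _ m]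
  rw [Matrix.trace_diagonal]
  push_cast
  rfl


lemma eig_mem_of_decomp {n κ : Type*} [Fintype n] [DecidableEq n] [Fintype κ] [DecidableEq κ]
    {M : Matrix n n ℂ} (hM : M.IsHermitian) (t : κ → ℝ) (v : κ → n → ℂ)
    (hv : ∀ k l, (∑ p, star (v k p) * v l p) = if k = l then 1 else 0)
    (hMe : ∀ q q', M q q' = ∑ k, (t k : ℂ) * (v k q * star (v k q')))
    (i : n) :
    hM.eigenvalues i = 0 ∨ ∃ k, hM.eigenvalues i = t k := by
  by_cases h0 : hM.eigenvalues i = 0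
  · exact Or.inl h0
  by_cases hex : ∃ k, hM.eigenvalues i = t k
  · exact Or.inr hex
  exfalso
  push_neg at hex
  set d : ℝ := hM.eigenvalues i with hd
  set w : n → ℂ := ⇑(hM.eigenvectorBasis i) with hwdef
  have hw : M *ᵥ w = d • w := hM.mulVec_eigenvectorBasis i
  set c : κ → ℂ := fun k => ∑ q', star (v k q') * w q' with hcdef
  have hexp : ∀ q, (M *ᵥ w) q = ∑ k, (t k : ℂ) * v k q * c k := by
    intro q
    simp only [Matrix.mulVec, dotProduct, hMe, hcdef]
    simp_rw [Finset.sum_mul]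
    rw [Finset.sum_comm]
    refine Finset.sum_congr rfl fun k _ => ?_
    rw [Finset.mul_sum]
    refine Finset.sum_congr rfl fun q' _ => by ring
  have hsm : ∀ q, (d • w) q = (d : ℂ) * w q := by
    intro q; simp [Pi.smul_apply, Complex.real_smul]
  -- coefficients vanish
  have hc : ∀ l, c l = 0 := by
    intro l
    have h1 : ∑ q, star (v l q) * (M *ᵥ w) q = (t l : ℂ) * c l := by
      simp_rw [hexp]
      have : ∀ q, star (v l q) * ∑ k, (t k : ℂ) * v k q * c k
          = ∑ k, (t k : ℂ) * c k * (star (v l q) * v k q) := by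
        intro q; rw [Finset.mul_sum]; exact Finset.sum_congr rfl fun k _ => by ring
      simp_rw [this]
      rw [Finset.sum_comm]
      have h3 : ∀ k, ∑ q, (t k : ℂ) * c k * (star (v l q) * v k q)
          = (t k : ℂ) * c k * (if l = k then 1 else 0) := fun k => by
        rw [← Finset.mul_sum, hv]
      simp_rw [h3, mul_ite, mul_one, mul_zero]
      simp
    have h2 : ∑ q, star (v l q) * (M *ᵥ w) q = (d : ℂ) * c l := by
      rw [hw, hcdef, Finset.mul_sum]
      exact Finset.sum_congr rfl fun q _ => by rw [hsm q]; ring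
    have heq : ((d : ℂ) - (t l : ℂ)) * c l = 0 := by
      rw [sub_mul, ← h2, h1, sub_self]
    have hdt : (d : ℂ) - (t l : ℂ) ≠ 0 := by
      rw [sub_ne_zero]
      exact_mod_cast hex l
    exact (mul_eq_zero.mp heq).resolve_left hdt
  have hMw0 : ∀ q, (d : ℂ) * w q = 0 := by
    intro q
    have h4 : (M *ᵥ w) q = 0 := by
      rw [hexp q]
      refine Finset.sum_eq_zero fun k _ => by rw [hc k, mul_zero]
    rw [hw] at h4
    rw [← hsm q, h4]
  have hd0 : (d : ℂ) ≠ 0 := by exact_mod_cast h0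
  have : w = 0 := funext fun q => by
    have := hMw0 q
    exact (mul_eq_zero.mp this).resolve_left hd0
  exact hM.eigenvectorBasis.orthonormal.ne_zero i (WithLp.ofLp_injective 2 (funext fun q => congrFun this q))


lemma sum_sqrt_of_moments {n κ : Type*} [Fintype n] [Fintype κ]
    (d : n → ℝ) (t : κ → ℝ)
    (hmom : ∀ m : ℕ, ∑ i, d i ^ (m + 1) = ∑ k, t k ^ (m + 1))
    (hmem : ∀ i, d i = 0 ∨ ∃ k, d i = t k) :
    ∑ i, Real.sqrt (d i) = ∑ k, Real.sqrt (t k) := by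
  classical
  set S : Finset ℝ := insert 0 (Finset.image t Finset.univ) with hS
  set Q : Polynomial ℝ := Lagrange.interpolate S id Real.sqrt with hQdef
  have hinj : Set.InjOn (id : ℝ → ℝ) S := Function.injective_id.injOn
  have hQ : ∀ x ∈ S, Q.eval x = Real.sqrt x := by
    intro x hx
    exact Lagrange.eval_interpolate_at_node (r := Real.sqrt) hinj hx
  have h0S : (0 : ℝ) ∈ S := Finset.mem_insert_self _ _
  have hQ0 : Q.coeff 0 = 0 := by
    rw [Polynomial.coeff_zero_eq_eval_zero, hQ 0 h0S, Real.sqrt_zero]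
  have hmemS : ∀ i, d i ∈ S := by
    intro i
    rcases hmem i with h | ⟨k, h⟩
    · rw [h]; exact h0S
    · rw [h]; exact Finset.mem_insert_of_mem (Finset.mem_image_of_mem t (Finset.mem_univ k))
  have htS : ∀ k, t k ∈ S := fun k =>
    Finset.mem_insert_of_mem (Finset.mem_image_of_mem t (Finset.mem_univ k))
  have heval : ∀ x : ℝ, Q.eval x = ∑ m ∈ Finset.range (Q.natDegree + 1), Q.coeff m * x ^ m :=
    fun x => Polynomial.eval_eq_sum_range (p := Q) x
  calc ∑ i, Real.sqrt (d i) = ∑ i, Q.eval (d i) := by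
        exact Finset.sum_congr rfl fun i _ => (hQ _ (hmemS i)).symm
    _ = ∑ m ∈ Finset.range (Q.natDegree + 1), Q.coeff m * ∑ i, d i ^ m := by
        simp_rw [heval, Finset.mul_sum]
        rw [Finset.sum_comm]
    _ = ∑ m ∈ Finset.range (Q.natDegree + 1), Q.coeff m * ∑ k, t k ^ m := by
        refine Finset.sum_congr rfl fun m _ => ?_
        cases m with
        | zero => rw [hQ0, zero_mul, zero_mul]
        | succ m => rw [hmom m]
    _ = ∑ k, Q.eval (t k) := by
        simp_rw [heval, Finset.mul_sum]
        rw [Finset.sum_comm]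
    _ = ∑ k, Real.sqrt (t k) := Finset.sum_congr rfl fun k _ => hQ _ (htS k)

lemma svd_sum_mul_orth {n κ : Type*} [Fintype n] [Fintype κ] [DecidableEq κ]
    (u : κ → n → ℂ)
    (hu : ∀ k l, (∑ p, star (u k p) * u l p) = if k = l then 1 else 0)
    (f g : κ → ℂ) :
    ∑ p, (∑ k, f k * star (u k p)) * (∑ l, g l * u l p) = ∑ k, f k * g k := by
  have h : ∀ p : n, (∑ k, f k * star (u k p)) * (∑ l, g l * u l p)
      = ∑ k, ∑ l, f k * g l * (star (u k p) * u l p) := by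
    intro p
    rw [Finset.sum_mul_sum]
    exact Finset.sum_congr rfl fun k _ => Finset.sum_congr rfl fun l _ => by ring
  simp_rw [h]
  rw [Finset.sum_comm]
  refine Finset.sum_congr rfl fun k _ => ?_
  rw [Finset.sum_comm]
  have h2 : ∀ l, ∑ p, f k * g l * (star (u k p) * u l p)
      = f k * g l * (if k = l then 1 else 0) := fun l => by
    rw [← Finset.mul_sum, hu]
  simp_rw [h2, mul_ite, mul_one, mul_zero]
  simp

lemma traceNorm_eq_of_svd {n κ : Type*} [Fintype n] [DecidableEq n] [Fintype κ] [DecidableEq κ]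
    (X : Matrix n n ℂ) (s : κ → ℝ) (hs : ∀ k, 0 ≤ s k) (u v : κ → n → ℂ)
    (hu : ∀ k l, (∑ p, star (u k p) * u l p) = if k = l then 1 else 0)
    (hv : ∀ k l, (∑ p, star (v k p) * v l p) = if k = l then 1 else 0)
    (hX : ∀ p q, X p q = ∑ k, (s k : ℂ) * u k p * star (v k q)) :
    traceNorm X = ∑ k, s k := by
  have hM : (Xᴴ * X).IsHermitian := Matrix.isHermitian_conjTranspose_mul_self X
  have hMe : ∀ q q', (Xᴴ * X) q q' = ∑ k, ((s k ^ 2 : ℝ) : ℂ) * (v k q * star (v k q')) := by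
    intro q q'
    have h0 : (Xᴴ * X) q q' = ∑ p, star (X p q) * X p q' := by
      simp [Matrix.mul_apply, Matrix.conjTranspose_apply]
    rw [h0]
    have e1 : ∀ p, star (X p q) = ∑ k, ((s k : ℂ) * v k q) * star (u k p) := by
      intro p; rw [hX, star_sum]
      refine Finset.sum_congr rfl fun k _ => ?_
      simp only [star_mul', star_star]
      rw [show star ((s k : ℝ) : ℂ) = ((s k : ℝ) : ℂ) from by
        rw [Complex.star_def, Complex.conj_ofReal]]
      ring
    have e2 : ∀ p, X p q' = ∑ k, ((s k : ℂ) * star (v k q')) * u k p := by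
      intro p; rw [hX]; exact Finset.sum_congr rfl fun k _ => by ring
    simp_rw [e1, e2]
    rw [svd_sum_mul_orth u hu]
    refine Finset.sum_congr rfl fun k _ => ?_
    push_cast
    ring
  have hMpow : ∀ m : ℕ, ∀ q q', ((Xᴴ * X) ^ (m + 1)) q q'
      = ∑ k, (((s k ^ 2 : ℝ) : ℂ)) ^ (m + 1) * (v k q * star (v k q')) := by
    intro m
    induction m with
    | zero =>
      intro q q'
      rw [pow_one, hMe q q']
      exact Finset.sum_congr rfl fun k _ => by rw [pow_one]
    | succ m ih =>
      intro q q'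
      have h1 : ((Xᴴ * X) ^ (m + 2)) q q' = ∑ p, ((Xᴴ * X) ^ (m + 1)) q p * (Xᴴ * X) p q' := by
        rw [pow_succ, Matrix.mul_apply]
      rw [h1]
      have e1 : ∀ p, ((Xᴴ * X) ^ (m + 1)) q p
          = ∑ k, ((((s k ^ 2 : ℝ) : ℂ)) ^ (m + 1) * v k q) * star (v k p) := by
        intro p; rw [ih q p]; exact Finset.sum_congr rfl fun k _ => by ring
      have e2 : ∀ p, (Xᴴ * X) p q' = ∑ k, (((s k ^ 2 : ℝ) : ℂ) * star (v k q')) * v k p := by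
        intro p; rw [hMe p q']; exact Finset.sum_congr rfl fun k _ => by ring
      simp_rw [e1, e2]
      rw [svd_sum_mul_orth v hv]
      refine Finset.sum_congr rfl fun k _ => ?_
      ring
  have htr : ∀ m : ℕ, (((Xᴴ * X) ^ (m + 1))).trace = ((∑ k, (s k ^ 2) ^ (m + 1) : ℝ) : ℂ) := by
    intro m
    rw [Matrix.trace]
    simp_rw [Matrix.diag_apply, hMpow m]
    rw [Finset.sum_comm]
    have h2 : ∀ k, ∑ q, (((s k ^ 2 : ℝ) : ℂ)) ^ (m + 1) * (v k q * star (v k q))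
        = (((s k ^ 2 : ℝ) : ℂ)) ^ (m + 1) := by
      intro k
      rw [← Finset.mul_sum]
      have : ∑ q, v k q * star (v k q) = 1 := by
        rw [show ∑ q, v k q * star (v k q) = ∑ q, star (v k q) * v k q from
          Finset.sum_congr rfl fun q _ => by ring, hv k k]
        simp
      rw [this, mul_one]
    simp_rw [h2]
    push_cast
    rfl
  have hmom : ∀ m : ℕ, ∑ i, hM.eigenvalues i ^ (m + 1) = ∑ k, (s k ^ 2) ^ (m + 1) := by
    intro m
    have h3 := trace_pow_eig hM (m + 1)
    rw [htr m] at h3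
    exact_mod_cast h3.symm
  have hmem : ∀ i, hM.eigenvalues i = 0 ∨ ∃ k, hM.eigenvalues i = s k ^ 2 :=
    eig_mem_of_decomp hM (fun k => s k ^ 2) v hv hMe
  have hfin : ∑ i, Real.sqrt (hM.eigenvalues i) = ∑ k, Real.sqrt (s k ^ 2) :=
    sum_sqrt_of_moments hM.eigenvalues (fun k => s k ^ 2) hmom hmem
  rw [traceNorm]
  rw [hfin]
  exact Finset.sum_congr rfl fun k _ => Real.sqrt_sq (hs k)

lemma orth_pair {κ₁ κ₂ n₁ n₂ : Type*} [DecidableEq κ₁] [DecidableEq κ₂] [Fintype n₁] [Fintype n₂]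
    (f : κ₁ → n₁ → ℂ) (g : κ₂ → n₂ → ℂ)
    (hf : ∀ i j, (∑ p, star (f i p) * f j p) = if i = j then 1 else 0)
    (hg : ∀ i j, (∑ p, star (g i p) * g j p) = if i = j then 1 else 0)
    (k l : κ₁ × κ₂) :
    (∑ p : n₁ × n₂, star (f k.1 p.1 * g k.2 p.2) * (f l.1 p.1 * g l.2 p.2))
      = if k = l then 1 else 0 := by
  rw [Fintype.sum_prod_type]
  have h : ∀ (p₁ : n₁) (p₂ : n₂), star (f k.1 p₁ * g k.2 p₂) * (f l.1 p₁ * g l.2 p₂)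
      = (star (f k.1 p₁) * f l.1 p₁) * (star (g k.2 p₂) * g l.2 p₂) := by
    intro p₁ p₂; rw [star_mul']; ring
  simp_rw [h, ← Finset.mul_sum, ← Finset.sum_mul]
  rw [hf, hg]
  by_cases h1 : k.1 = l.1 <;> by_cases h2 : k.2 = l.2 <;>
    simp [Prod.ext_iff, h1, h2]

lemma orth_star {κ n : Type*} [DecidableEq κ] [Fintype n] (f : κ → n → ℂ)
    (hf : ∀ i j, (∑ p, star (f i p) * f j p) = if i = j then 1 else 0)
    (i j : κ) :
    (∑ p, star (star (f i p)) * star (f j p)) = if i = j then 1 else 0 := by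
  have h : ∀ p, star (star (f i p)) * star (f j p) = star (star (f i p) * f j p) := by
    intro p; rw [star_mul']
  simp_rw [h]
  rw [← star_sum, hf i j]
  split_ifs <;> simp

lemma sum_prod_factor {β γ : Type*} [Fintype β] [Fintype γ] (f : β → ℝ) (g : γ → ℝ) :
    (∑ k : β × γ, f k.1 * g k.2) = (∑ i, f i) * (∑ j, g j) := by
  rw [Finset.sum_mul_sum, Fintype.sum_prod_type]

set_option maxHeartbeats 1600000 in
/-- For the fixed-sector state `|Ψ⟩ = Σ_{i,j} λ_i λ_j |i⟩_A (|i⟩⊗|j⟩)_B |j⟩_C`,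
one has `E_{A:BC} = E_{A:B}(Tr_C ρ) = 2 log Σ_i λ_i`. -/
theorem stmt_16 {ι A BL BR C : Type*} [Fintype ι] [DecidableEq ι]
    [Fintype A] [Fintype BL] [Fintype BR] [Fintype C]
    [DecidableEq A] [DecidableEq BL] [DecidableEq BR] [DecidableEq C]
    (lam : ι → ℝ) (hlam : ∀ i, 0 ≤ lam i) (hnorm : ∑ i, (lam i) ^ 2 = 1)
    (eA : ι → A → ℂ) (eBL : ι → BL → ℂ) (eBR : ι → BR → ℂ) (eC : ι → C → ℂ)
    (hA : ∀ i j, (∑ p, star (eA i p) * eA j p) = if i = j then 1 else 0)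
    (hBL : ∀ i j, (∑ p, star (eBL i p) * eBL j p) = if i = j then 1 else 0)
    (hBR : ∀ i j, (∑ p, star (eBR i p) * eBR j p) = if i = j then 1 else 0)
    (hC : ∀ i j, (∑ p, star (eC i p) * eC j p) = if i = j then 1 else 0)
    (Ψ : A × (BL × BR) × C → ℂ)
    (hΨ : ∀ a bl br c, Ψ (a, (bl, br), c)
      = ∑ i, ∑ j, (lam i : ℂ) * (lam j : ℂ) * eA i a * eBL i bl * eBR j br * eC j c)
    (ρ : Matrix (A × (BL × BR) × C) (A × (BL × BR) × C) ℂ)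
    (hρ : ∀ p q, ρ p q = Ψ p * star (Ψ q)) :
    negE ρ = negE (traceOutC ρ) ∧ negE ρ = 2 * Real.log (∑ i, lam i) := by
  classical
  have hstarR : ∀ t : ℝ, star ((t : ℝ) : ℂ) = ((t : ℝ) : ℂ) := fun t => by
    rw [Complex.star_def, Complex.conj_ofReal]
  set χ : A → BL → ℂ := fun a bl => ∑ i, (lam i : ℂ) * eA i a * eBL i bl with hχdef
  set φ : BR × C → ℂ := fun r => ∑ j, (lam j : ℂ) * (eBR j r.1 * eC j r.2) with hφdef
  have hfact : ∀ (a : A) (r : (BL × BR) × C),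
      Ψ (a, r) = χ a r.1.1 * φ (r.1.2, r.2) := by
    intro a r
    obtain ⟨⟨bl, br⟩, c⟩ := r
    rw [hΨ a bl br c]
    simp only [hχdef, hφdef]
    rw [Finset.sum_mul_sum]
    exact Finset.sum_congr rfl fun i _ => Finset.sum_congr rfl fun j _ => by ring
  have hχstar : ∀ a bl, star (χ a bl) = ∑ i, (lam i : ℂ) * star (eA i a) * star (eBL i bl) := by
    intro a bl
    simp only [hχdef]
    rw [star_sum]
    refine Finset.sum_congr rfl fun i _ => ?_
    simp only [star_mul', hstarR]
  have hE : ∀ i j : ι, (∑ r : BR × C, star (eBR i r.1 * eC i r.2) * (eBR j r.1 * eC j r.2))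
      = if i = j then 1 else 0 := by
    intro i j
    have h := orth_pair eBR eC hBR hC (i, i) (j, j)
    simpa [Prod.ext_iff] using h
  have hφstar : ∀ r : BR × C, star (φ r) = ∑ j, (lam j : ℂ) * star (eBR j r.1 * eC j r.2) := by
    intro r
    simp only [hφdef]
    rw [star_sum]
    refine Finset.sum_congr rfl fun j _ => ?_
    rw [star_mul', hstarR]
  have hφnorm : (∑ r : BR × C, star (φ r) * φ r) = 1 := by
    have h2 : ∀ r : BR × C, star (φ r) * φ r
        = (∑ j, (lam j : ℂ) * star (eBR j r.1 * eC j r.2))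
          * (∑ j, (lam j : ℂ) * (eBR j r.1 * eC j r.2)) := by
      intro r; rw [hφstar r]
    simp_rw [h2]
    rw [svd_sum_mul_orth (fun j (r : BR × C) => eBR j r.1 * eC j r.2) hE]
    have h3 : ((∑ j, lam j ^ 2 : ℝ) : ℂ) = ∑ j, (lam j : ℂ) * (lam j : ℂ) := by
      push_cast
      exact Finset.sum_congr rfl fun j _ => by ring
    rw [← h3, hnorm]
    norm_num
  set W : ι → ((BL × BR) × C) → ℂ := fun i r => eBL i r.1.1 * φ (r.1.2, r.2) with hWdef
  have hW : ∀ i j, (∑ r : (BL × BR) × C, star (W i r) * W j r) = if i = j then 1 else 0 := by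
    intro i j
    have h1 : ∀ r : (BL × BR) × C, star (W i r) * W j r
        = (star (eBL i r.1.1) * eBL j r.1.1) * (star (φ (r.1.2, r.2)) * φ (r.1.2, r.2)) := by
      intro r; simp only [hWdef]; rw [star_mul']; ring
    simp_rw [h1]
    rw [Fintype.sum_prod_type]
    simp_rw [Fintype.sum_prod_type]
    have h3 : ∀ bl, (∑ br, ∑ c, (star (eBL i bl) * eBL j bl)
          * (star (φ (br, c)) * φ (br, c)))
        = (star (eBL i bl) * eBL j bl) * ∑ br, ∑ c, star (φ (br, c)) * φ (br, c) := by
      intro bl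
      rw [Finset.mul_sum]
      exact Finset.sum_congr rfl fun br _ => by rw [Finset.mul_sum]
    simp_rw [h3]
    have h4 : (∑ br, ∑ c, star (φ (br, c)) * φ (br, c)) = 1 := by
      have h5 := hφnorm
      rw [Fintype.sum_prod_type] at h5
      exact h5
    simp_rw [h4, mul_one]
    exact hBL i j
  -- ===== SVD data for ptA ρ =====
  set u₁ : (ι × ι) → (A × (BL × BR) × C) → ℂ :=
    fun k p => star (eA k.1 p.1) * W k.2 p.2 with hu₁def
  set v₁ : (ι × ι) → (A × (BL × BR) × C) → ℂ :=
    fun k p => star (eA k.2 p.1) * W k.1 p.2 with hv₁def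
  have hu₁ : ∀ k l, (∑ p, star (u₁ k p) * u₁ l p) = if k = l then 1 else 0 := by
    intro k l
    exact orth_pair (fun i a => star (eA i a)) W (orth_star eA hA) hW k l
  have hv₁ : ∀ k l, (∑ p, star (v₁ k p) * v₁ l p) = if k = l then 1 else 0 := by
    intro k l
    have h := orth_pair (fun i a => star (eA i a)) W (orth_star eA hA) hW (k.2, k.1) (l.2, l.1)
    rcases eq_or_ne k l with hkl | hkl
    · subst hkl
      rw [if_pos rfl] at h ⊢
      exact h
    · have hne : ((k.2, k.1) : ι × ι) ≠ (l.2, l.1) := by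
        intro hcon
        apply hkl
        have h1 := congrArg Prod.fst hcon
        have h2 := congrArg Prod.snd hcon
        simp only at h1 h2
        rw [Prod.ext_iff]
        exact ⟨h2, h1⟩
      rw [if_neg hne] at h
      rw [if_neg hkl]
      exact h
  have hXρ : ∀ p q, (ptA ρ) p q
      = ∑ k : ι × ι, ((lam k.2 * lam k.1 : ℝ) : ℂ) * u₁ k p * star (v₁ k q) := by
    intro p q
    have hL : (ptA ρ) p q = (χ q.1 p.2.1.1 * φ (p.2.1.2, p.2.2))
        * star (χ p.1 q.2.1.1 * φ (q.2.1.2, q.2.2)) := by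
      show ρ (q.1, p.2) (p.1, q.2) = _
      rw [hρ, hfact q.1 p.2, hfact p.1 q.2]
    rw [hL]
    have hterm : ∀ k : ι × ι, ((lam k.2 * lam k.1 : ℝ) : ℂ) * u₁ k p * star (v₁ k q)
        = ((lam k.1 : ℂ) * star (eA k.1 p.1) * star (eBL k.1 q.2.1.1))
          * (((lam k.2 : ℂ) * eA k.2 q.1 * eBL k.2 p.2.1.1)
            * (φ (p.2.1.2, p.2.2) * star (φ (q.2.1.2, q.2.2)))) := by
      intro k
      simp only [hu₁def, hv₁def, hWdef]
      push_cast
      simp only [star_mul', star_star]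
      ring
    simp_rw [hterm]
    rw [Fintype.sum_prod_type]
    have hsum1 : ∀ x : ι, (∑ y : ι, ((lam x : ℂ) * star (eA x p.1) * star (eBL x q.2.1.1))
          * (((lam y : ℂ) * eA y q.1 * eBL y p.2.1.1)
            * (φ (p.2.1.2, p.2.2) * star (φ (q.2.1.2, q.2.2)))))
        = ((lam x : ℂ) * star (eA x p.1) * star (eBL x q.2.1.1))
          * ((∑ y, (lam y : ℂ) * eA y q.1 * eBL y p.2.1.1)
            * (φ (p.2.1.2, p.2.2) * star (φ (q.2.1.2, q.2.2)))) := by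
      intro x
      rw [← Finset.mul_sum, ← Finset.sum_mul]
    simp_rw [hsum1]
    rw [← Finset.sum_mul]
    rw [show (∑ x, (lam x : ℂ) * star (eA x p.1) * star (eBL x q.2.1.1))
        = star (χ p.1 q.2.1.1) from (hχstar _ _).symm]
    rw [show (∑ y, (lam y : ℂ) * eA y q.1 * eBL y p.2.1.1) = χ q.1 p.2.1.1 from rfl]
    rw [star_mul']
    ring
  have hTN1 : traceNorm (ptA ρ) = ∑ k : ι × ι, lam k.2 * lam k.1 :=
    traceNorm_eq_of_svd (ptA ρ) (fun k => lam k.2 * lam k.1)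
      (fun k => mul_nonneg (hlam _) (hlam _)) u₁ v₁ hu₁ hv₁ hXρ
  -- ===== SVD data for ptA (traceOutC ρ) =====
  set K : BR → BR → ℂ := fun br br' => ∑ j, ((lam j ^ 2 : ℝ) : ℂ) * eBR j br * star (eBR j br')
    with hKdef
  have hK : ∀ br br', (∑ c, φ (br, c) * star (φ (br', c))) = K br br' := by
    intro br br'
    have h1 : ∀ c, φ (br, c) * star (φ (br', c))
        = ∑ j, ∑ j', ((lam j : ℂ) * (lam j' : ℂ)) * (eBR j br * star (eBR j' br'))
            * (eC j c * star (eC j' c)) := by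
      intro c
      rw [hφstar (br', c)]
      simp only [hφdef]
      rw [Finset.sum_mul_sum]
      refine Finset.sum_congr rfl fun j _ => Finset.sum_congr rfl fun j' _ => ?_
      rw [star_mul']
      ring
    simp_rw [h1]
    have h2 : (∑ c, ∑ j, ∑ j', ((lam j : ℂ) * (lam j' : ℂ)) * (eBR j br * star (eBR j' br'))
          * (eC j c * star (eC j' c)))
        = ∑ j, ∑ j', ((lam j : ℂ) * (lam j' : ℂ)) * (eBR j br * star (eBR j' br'))
          * (∑ c, eC j c * star (eC j' c)) := by
      rw [Finset.sum_comm]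
      refine Finset.sum_congr rfl fun j _ => ?_
      rw [Finset.sum_comm]
      refine Finset.sum_congr rfl fun j' _ => ?_
      rw [← Finset.mul_sum]
    rw [h2]
    have h3 : ∀ j j' : ι, (∑ c, eC j c * star (eC j' c)) = if j' = j then 1 else 0 := by
      intro j j'
      rw [show (∑ c, eC j c * star (eC j' c)) = ∑ c, star (eC j' c) * eC j c from
        Finset.sum_congr rfl fun c _ => by ring, hC j' j]
    simp_rw [h3, mul_ite, mul_one, mul_zero]
    simp only [hKdef]
    refine Finset.sum_congr rfl fun j _ => ?_
    rw [Finset.sum_ite_eq' Finset.univ j]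
    simp only [Finset.mem_univ, if_true]
    push_cast
    ring
  set u₂ : (ι × ι × ι) → (A × (BL × BR)) → ℂ :=
    fun k p => star (eA k.1 p.1) * (eBL k.2.1 p.2.1 * eBR k.2.2 p.2.2) with hu₂def
  set v₂ : (ι × ι × ι) → (A × (BL × BR)) → ℂ :=
    fun k p => star (eA k.2.1 p.1) * (eBL k.1 p.2.1 * eBR k.2.2 p.2.2) with hv₂def
  have hBLR : ∀ m m' : ι × ι, (∑ r : BL × BR, star (eBL m.1 r.1 * eBR m.2 r.2)
      * (eBL m'.1 r.1 * eBR m'.2 r.2)) = if m = m' then 1 else 0 :=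
    orth_pair eBL eBR hBL hBR
  have hu₂ : ∀ k l, (∑ p, star (u₂ k p) * u₂ l p) = if k = l then 1 else 0 := by
    intro k l
    exact orth_pair (fun i a => star (eA i a))
      (fun (m : ι × ι) (r : BL × BR) => eBL m.1 r.1 * eBR m.2 r.2)
      (orth_star eA hA) hBLR k l
  have hv₂ : ∀ k l, (∑ p, star (v₂ k p) * v₂ l p) = if k = l then 1 else 0 := by
    intro k l
    have h := orth_pair (fun i a => star (eA i a))
      (fun (m : ι × ι) (r : BL × BR) => eBL m.1 r.1 * eBR m.2 r.2)
      (orth_star eA hA) hBLR (k.2.1, (k.1, k.2.2)) (l.2.1, (l.1, l.2.2))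
    rcases eq_or_ne k l with hkl | hkl
    · subst hkl
      rw [if_pos rfl] at h ⊢
      exact h
    · have hne : ((k.2.1, (k.1, k.2.2)) : ι × ι × ι) ≠ (l.2.1, (l.1, l.2.2)) := by
        intro hcon
        apply hkl
        have h1 := congrArg Prod.fst hcon
        have h2 := congrArg (fun x : ι × ι × ι => x.2.1) hcon
        have h3 := congrArg (fun x : ι × ι × ι => x.2.2) hcon
        simp only at h1 h2 h3
        rw [Prod.ext_iff]
        refine ⟨h2, ?_⟩
        rw [Prod.ext_iff]
        exact ⟨h1, h3⟩
      rw [if_neg hne] at h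
      rw [if_neg hkl]
      exact h
  have hXσ : ∀ p q, (ptA (traceOutC ρ)) p q
      = ∑ k : ι × ι × ι, ((lam k.2.1 * lam k.1 * lam k.2.2 ^ 2 : ℝ) : ℂ)
          * u₂ k p * star (v₂ k q) := by
    intro p q
    have hL : (ptA (traceOutC ρ)) p q
        = (χ q.1 p.2.1 * star (χ p.1 q.2.1)) * K p.2.2 q.2.2 := by
      show traceOutC ρ (q.1, p.2) (p.1, q.2) = _
      show (∑ c, ρ (q.1, p.2, c) (p.1, q.2, c)) = _
      have h1 : ∀ c : C, ρ (q.1, p.2, c) (p.1, q.2, c)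
          = (χ q.1 p.2.1 * star (χ p.1 q.2.1)) * (φ (p.2.2, c) * star (φ (q.2.2, c))) := by
        intro c
        rw [hρ, hfact q.1 (p.2, c), hfact p.1 (q.2, c), star_mul']
        ring
      simp_rw [h1]
      rw [← Finset.mul_sum, hK p.2.2 q.2.2]
    rw [hL]
    have hterm : ∀ k : ι × ι × ι, ((lam k.2.1 * lam k.1 * lam k.2.2 ^ 2 : ℝ) : ℂ)
          * u₂ k p * star (v₂ k q)
        = ((lam k.1 : ℂ) * star (eA k.1 p.1) * star (eBL k.1 q.2.1))
          * (((lam k.2.1 : ℂ) * eA k.2.1 q.1 * eBL k.2.1 p.2.1)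
            * (((lam k.2.2 ^ 2 : ℝ) : ℂ) * eBR k.2.2 p.2.2 * star (eBR k.2.2 q.2.2))) := by
      intro k
      simp only [hu₂def, hv₂def]
      push_cast
      simp only [star_mul', star_star]
      ring
    simp_rw [hterm]
    rw [Fintype.sum_prod_type]
    have hsum1 : ∀ x : ι, (∑ m : ι × ι, ((lam x : ℂ) * star (eA x p.1) * star (eBL x q.2.1))
          * (((lam m.1 : ℂ) * eA m.1 q.1 * eBL m.1 p.2.1)
            * (((lam m.2 ^ 2 : ℝ) : ℂ) * eBR m.2 p.2.2 * star (eBR m.2 q.2.2))))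
        = ((lam x : ℂ) * star (eA x p.1) * star (eBL x q.2.1))
          * ((∑ y, (lam y : ℂ) * eA y q.1 * eBL y p.2.1)
            * (∑ z, ((lam z ^ 2 : ℝ) : ℂ) * eBR z p.2.2 * star (eBR z q.2.2))) := by
      intro x
      rw [← Finset.mul_sum]
      congr 1
      rw [Fintype.sum_prod_type]
      have h5 : ∀ y : ι, (∑ z, ((lam y : ℂ) * eA y q.1 * eBL y p.2.1)
            * (((lam z ^ 2 : ℝ) : ℂ) * eBR z p.2.2 * star (eBR z q.2.2)))
          = ((lam y : ℂ) * eA y q.1 * eBL y p.2.1)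
            * (∑ z, ((lam z ^ 2 : ℝ) : ℂ) * eBR z p.2.2 * star (eBR z q.2.2)) := by
        intro y
        rw [← Finset.mul_sum]
      simp_rw [h5]
      rw [← Finset.sum_mul]
    simp_rw [hsum1]
    rw [← Finset.sum_mul]
    rw [show (∑ x, (lam x : ℂ) * star (eA x p.1) * star (eBL x q.2.1))
        = star (χ p.1 q.2.1) from (hχstar _ _).symm]
    rw [show (∑ y, (lam y : ℂ) * eA y q.1 * eBL y p.2.1) = χ q.1 p.2.1 from rfl]
    rw [show (∑ z, ((lam z ^ 2 : ℝ) : ℂ) * eBR z p.2.2 * star (eBR z q.2.2))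
        = K p.2.2 q.2.2 from rfl]
    ring
  have hTN2 : traceNorm (ptA (traceOutC ρ))
      = ∑ k : ι × ι × ι, lam k.2.1 * lam k.1 * lam k.2.2 ^ 2 :=
    traceNorm_eq_of_svd (ptA (traceOutC ρ))
      (fun k => lam k.2.1 * lam k.1 * lam k.2.2 ^ 2)
      (fun k => mul_nonneg (mul_nonneg (hlam _) (hlam _)) (sq_nonneg _)) u₂ v₂ hu₂ hv₂ hXσ
  -- ===== evaluate the sums =====
  have hsumA : (∑ k : ι × ι, lam k.2 * lam k.1) = (∑ i, lam i) ^ 2 := by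
    rw [show (∑ k : ι × ι, lam k.2 * lam k.1) = ∑ k : ι × ι, lam k.1 * lam k.2 from
      Finset.sum_congr rfl fun k _ => by ring]
    rw [sum_prod_factor lam lam, sq]
  have hsumB : (∑ k : ι × ι × ι, lam k.2.1 * lam k.1 * lam k.2.2 ^ 2) = (∑ i, lam i) ^ 2 := by
    rw [show (∑ k : ι × ι × ι, lam k.2.1 * lam k.1 * lam k.2.2 ^ 2)
        = ∑ k : ι × ι × ι, lam k.1 * (lam k.2.1 * lam k.2.2 ^ 2) from
      Finset.sum_congr rfl fun k _ => by ring]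
    rw [sum_prod_factor lam (fun m : ι × ι => lam m.1 * lam m.2 ^ 2)]
    rw [sum_prod_factor lam (fun z : ι => lam z ^ 2), hnorm, mul_one, sq]
  have hTN1' : traceNorm (ptA ρ) = (∑ i, lam i) ^ 2 := by rw [hTN1, hsumA]
  have hTN2' : traceNorm (ptA (traceOutC ρ)) = (∑ i, lam i) ^ 2 := by rw [hTN2, hsumB]
  constructor
  · simp only [negE]
    rw [hTN1', hTN2']
  · simp only [negE]
    rw [hTN1', Real.log_pow]
    push_cast
    ring
end

section
/- Let A and B be nonempty disjoint finite sets of qubit sites and let |Φ⟩ = 2^{-(|A∪B|-1)/2} Σ_{γ ∈ {0,1}^{A∪B}, Σγ odd} |γ⟩. Then for any site s ∈ A∪B, the single-site reduced density matrix is I/2, and |Φ⟩ cannot be written as |φ_A⟩ ⊗ |φ_B⟩ for any states |φ_A⟩ on the A sites and |φ_B⟩ on the B sites. -/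
/-- Extend a single-site configuration `g` at site `s` by a configuration `β` of the
remaining sites. -/
def extCfg {V : Type*} [DecidableEq V] (s : V) (g : ZMod 2)
    (β : {i : V // i ≠ s} → ZMod 2) : V → ZMod 2 :=
  fun i => if h : i = s then g else β ⟨i, h⟩

lemma parity_count (ι : Type*) [Fintype ι] [DecidableEq ι] (i0 : ι) (t : ZMod 2) :
    (Finset.univ.filter (fun f : ι → ZMod 2 => ∑ i, f i = t)).card
      = 2 ^ (Fintype.card ι - 1) := by
  have hsum : ∀ f : ι → ZMod 2, ∑ i, Function.update f i0 (f i0 + 1) i = (∑ i, f i) + 1 := by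
    intro f
    rw [Finset.sum_update_of_mem (Finset.mem_univ i0)]
    rw [← Finset.add_sum_erase _ f (Finset.mem_univ i0), Finset.sdiff_singleton_eq_erase]
    ring
  have hinv : ∀ f : ι → ZMod 2,
      Function.update (Function.update f i0 (f i0 + 1)) i0
        ((Function.update f i0 (f i0 + 1)) i0 + 1) = f := by
    intro f
    rw [Function.update_self, Function.update_idem]
    have : f i0 + 1 + 1 = f i0 := by
      have h11 : (1 : ZMod 2) + 1 = 0 := rfl
      rw [add_assoc, h11, add_zero]
    rw [this, Function.update_eq_self]
  have key : ∀ u : ZMod 2,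
      (Finset.univ.filter (fun f : ι → ZMod 2 => ∑ i, f i = u)).card =
      (Finset.univ.filter (fun f : ι → ZMod 2 => ∑ i, f i = u + 1)).card := by
    intro u
    apply Finset.card_nbij' (fun f => Function.update f i0 (f i0 + 1))
      (fun f => Function.update f i0 (f i0 + 1))
    · intro f hf
      simp only [Finset.mem_coe, Finset.mem_filter, Finset.mem_univ, true_and] at hf ⊢
      rw [hsum, hf]
    · intro f hf
      simp only [Finset.mem_coe, Finset.mem_filter, Finset.mem_univ, true_and] at hf ⊢
      rw [hsum, hf, add_assoc]
      have h11 : (1 : ZMod 2) + 1 = 0 := rfl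
      rw [h11, add_zero]
    · intro f _
      exact hinv f
    · intro f _
      exact hinv f
  have hpart : (Finset.univ.filter (fun f : ι → ZMod 2 => ∑ i, f i = t)).card
      + (Finset.univ.filter (fun f : ι → ZMod 2 => ¬ (∑ i, f i = t))).card
      = (Finset.univ : Finset (ι → ZMod 2)).card :=
    Finset.card_filter_add_card_filter_not _
  have hneg : (Finset.univ.filter (fun f : ι → ZMod 2 => ¬ (∑ i, f i = t))).card =
      (Finset.univ.filter (fun f : ι → ZMod 2 => ∑ i, f i = t + 1)).card := by
    congr 1
    apply Finset.filter_congr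
    intro f _
    have : ∀ x u : ZMod 2, (¬ x = u) ↔ x = u + 1 := by decide
    simp [this]
  rw [hneg, ← key] at hpart
  have hcard : (Finset.univ : Finset (ι → ZMod 2)).card = 2 ^ Fintype.card ι := by
    simp [Finset.card_univ]
  rw [hcard] at hpart
  have h1 : 1 ≤ Fintype.card ι := Fintype.card_pos_iff.mpr ⟨i0⟩
  set m := Fintype.card ι with hm
  have h2 : 2 * 2 ^ (m - 1) = (2:ℕ) ^ m := by
    rw [← pow_succ', Nat.sub_add_cancel h1]
  rw [← h2, ← two_mul] at hpart
  exact Nat.eq_of_mul_eq_mul_left (by norm_num) hpart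

lemma sum_extCfg {V : Type*} [Fintype V] [DecidableEq V] (s : V) (g : ZMod 2)
    (β : {i : V // i ≠ s} → ZMod 2) :
    ∑ i, extCfg s g β i = g + ∑ b : {i : V // i ≠ s}, β b := by
  rw [← Finset.add_sum_erase _ _ (Finset.mem_univ s)]
  congr 1
  · simp [extCfg]
  · rw [Finset.sum_subtype (Finset.univ.erase s) (p := fun i => i ≠ s)
      (by intro i; simp [Finset.mem_erase])]
    apply Finset.sum_congr rfl
    intro b _
    simp [extCfg, b.2]

/-- For the odd-parity uniform superposition `|Φ⟩` on the qubit sites `A ∪ B`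
(`A`, `B` nonempty and disjoint), every single-site reduced density matrix is the
maximally mixed state `I/2`, and `|Φ⟩ is not a tensor product of a state on the `A`
sites with a state on the `B` sites. -/
theorem stmt_19 {V : Type*} [Fintype V] [DecidableEq V]
    (A B : Finset V) (hA : A.Nonempty) (hB : B.Nonempty)
    (hdisj : Disjoint A B) (hcover : A ∪ B = Finset.univ)
    (Φ : (V → ZMod 2) → ℂ)
    (hΦ : ∀ γ, Φ γ = if (∑ i, γ i) = 1
      then ((Real.sqrt (2 ^ (Fintype.card V - 1)))⁻¹ : ℂ) else 0) :
    (∀ (s : V) (ρs : Matrix (ZMod 2) (ZMod 2) ℂ),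
      (∀ g g', ρs g g'
          = ∑ β : {i : V // i ≠ s} → ZMod 2,
              Φ (extCfg s g β) * star (Φ (extCfg s g' β))) →
      ρs = (1 / 2 : ℂ) • 1) ∧
    ¬ ∃ (φA : ({i : V // i ∈ A} → ZMod 2) → ℂ) (φB : ({i : V // i ∈ B} → ZMod 2) → ℂ),
      ∀ γ : V → ZMod 2,
        Φ γ = φA (fun i => γ i.1) * φB (fun i => γ i.1) := by
  obtain ⟨a, ha⟩ := hA
  obtain ⟨b, hb⟩ := hB
  have hab : a ≠ b := fun h => (Finset.disjoint_left.mp hdisj ha (h ▸ hb))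
  set n := Fintype.card V with hn
  have hn2 : 2 ≤ n := by
    have : 1 < n := Fintype.one_lt_card_iff.mpr ⟨a, b, hab⟩
    omega
  set c : ℂ := ((Real.sqrt (2 ^ (n - 1)) : ℝ) : ℂ)⁻¹ with hc
  have hsq : (0:ℝ) < 2 ^ (n-1) := by positivity
  have hcne : c ≠ 0 := by
    simp only [hc, ne_eq, Complex.ofReal_eq_zero, inv_eq_zero]
    positivity
  have hstar : star c = c := by
    rw [hc, star_inv₀, Complex.star_def, Complex.conj_ofReal]
  have hcc : c * star c = ((2:ℂ) ^ (n-1))⁻¹ := by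
    rw [hstar, hc, ← mul_inv, ← Complex.ofReal_mul,
      Real.mul_self_sqrt (le_of_lt hsq)]
    push_cast
    ring_nf
  constructor
  · intro s ρs hρ
    obtain ⟨s', hs'⟩ := Fintype.exists_ne_of_one_lt_card (by omega) s
    have hcardsub : Fintype.card {i : V // i ≠ s} = n - 1 := by
      have h := Fintype.card_subtype_compl (fun i : V => i = s)
      simp only [Fintype.card_subtype_eq] at h
      exact h
    ext g g'
    rw [hρ g g']
    by_cases hgg : g = g'
    · subst hgg
      have hterm : ∀ β : {i : V // i ≠ s} → ZMod 2,
          Φ (extCfg s g β) * star (Φ (extCfg s g β)) =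
          if (∑ b, β b) = 1 + g then ((2:ℂ)^(n-1))⁻¹ else 0 := by
        intro β
        rw [hΦ (extCfg s g β), sum_extCfg]
        have hiff : ∀ g x : ZMod 2, (g + x = 1) ↔ (x = 1 + g) := by decide
        by_cases hx : (∑ b, β b) = 1 + g
        · rw [if_pos ((hiff g _).mpr hx), if_pos hx]
          exact hcc
        · rw [if_neg (fun h => hx ((hiff g _).mp h)), if_neg hx, star_zero, mul_zero]
      simp only [hterm]
      rw [← Finset.sum_filter, Finset.sum_const,
        parity_count _ ⟨s', hs'⟩ (1 + g), hcardsub]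
      rw [Matrix.smul_apply, Matrix.one_apply_eq, smul_eq_mul, mul_one]
      rw [nsmul_eq_mul]
      push_cast
      have hstep : n - 1 = (n - 2) + 1 := by omega
      rw [hstep]
      have e1 : n - 2 + 1 - 1 = n - 2 := by omega
      rw [e1, pow_succ, mul_inv, ← mul_assoc,
        mul_inv_cancel₀ (pow_ne_zero _ (two_ne_zero : (2:ℂ) ≠ 0)), one_mul]
      norm_num
    · rw [Matrix.smul_apply, Matrix.one_apply_ne hgg, smul_zero]
      apply Finset.sum_eq_zero
      intro β _
      rw [hΦ (extCfg s g β), hΦ (extCfg s g' β), sum_extCfg, sum_extCfg]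
      have hd : ∀ g g' x : ZMod 2, g ≠ g' → ¬(g + x = 1 ∧ g' + x = 1) := by decide
      by_cases h1 : g + ∑ b, β b = 1
      · have h2 : ¬ (g' + ∑ b, β b = 1) := fun h => hd g g' _ hgg ⟨h1, h⟩
        rw [if_neg h2, star_zero, mul_zero]
      · rw [if_neg h1, zero_mul]
  · rintro ⟨φA, φB, hfac⟩
    set γ1 : V → ZMod 2 := fun i => if i = a then 1 else 0 with hγ1
    set γ2 : V → ZMod 2 := fun i => if i = b then 1 else 0 with hγ2
    have hs1 : ∑ i, γ1 i = 1 := by simp [hγ1]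
    have hs2 : ∑ i, γ2 i = 1 := by simp [hγ2]
    have hs3 : ∑ i, (γ1 i + γ2 i) = 0 := by
      rw [Finset.sum_add_distrib, hs1, hs2]; decide
    have h1 : Φ γ1 ≠ 0 := by rw [hΦ, if_pos hs1]; exact hcne
    have h2 : Φ γ2 ≠ 0 := by rw [hΦ, if_pos hs2]; exact hcne
    have h3 : Φ (fun i => γ1 i + γ2 i) = 0 := by
      rw [hΦ, if_neg]; rw [hs3]; decide
    have hrA : (fun i : {i : V // i ∈ A} => γ1 i.1 + γ2 i.1) = fun i => γ1 i.1 := by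
      funext i
      have : i.1 ≠ b := fun h => Finset.disjoint_left.mp hdisj i.2 (h ▸ hb)
      simp [hγ2, this]
    have hrB : (fun i : {i : V // i ∈ B} => γ1 i.1 + γ2 i.1) = fun i => γ2 i.1 := by
      funext i
      have : i.1 ≠ a := fun h => Finset.disjoint_right.mp hdisj i.2 (h ▸ ha)
      simp [hγ1, this]
    have e1 := hfac γ1
    have e2 := hfac γ2
    have e3 := hfac (fun i => γ1 i + γ2 i)
    rw [hrA, hrB, h3] at e3
    have hA0 : φA (fun i => γ1 i.1) ≠ 0 := fun h => h1 (by rw [e1, h, zero_mul])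
    have hB0 : φB (fun i => γ2 i.1) ≠ 0 := fun h => h2 (by rw [e2, h, mul_zero])
    exact (mul_ne_zero hA0 hB0) e3.symm
end
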